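/- arXiv:1701.07460 — 4 statements merged into one kernel-verified Lean document; each statement's English description precedes it below -/
import Mathlib

section
/- For every positive integer n, r_2(n) = 4(d_{1,4}(n) − d_{3,4}(n)), where d_{j,4}(n) denotes the number of divisors of n congruent to j modulo 4. -/
open scoped BigOperators

/-- Number of representations of `n` as an ordered sum of `k` squares of integers. -/
noncomputable def rsq (k n : ℕ) : ℕ :=
  Nat.card {v : Fin k → ℤ // ∑ i, (v i) ^ 2 = (n : ℤ)}


open Zsqrtd
local notation "ℤ[i]" => GaussianInt

namespace Jacobi

noncomputable def g (n : ℕ) : ℕ := Nat.card {z : ℤ[i] // z.norm = (n : ℤ)}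

def χ (d : ℕ) : ℤ := if d % 4 = 1 then 1 else if d % 4 = 3 then -1 else 0

lemma chi_mul (a b : ℕ) : χ (a * b) = χ a * χ b := by
  unfold χ
  rw [Nat.mul_mod]
  have ha : a % 4 < 4 := Nat.mod_lt _ (by norm_num)
  have hb : b % 4 < 4 := Nat.mod_lt _ (by norm_num)
  interval_cases h1 : (a % 4) <;> interval_cases h2 : (b % 4) <;> norm_num

lemma norm_mk (a b : ℤ) : (⟨a, b⟩ : ℤ[i]).norm = a * a + b * b := by
  simp [Zsqrtd.norm]

noncomputable def sols (n : ℕ) : Finset ℤ[i] :=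
  (((Finset.Icc (-(n:ℤ)) n) ×ˢ (Finset.Icc (-(n:ℤ)) n)).image
    fun p => (⟨p.1, p.2⟩ : ℤ[i])).filter fun z => z.norm = (n : ℤ)

lemma abs_le_of (a b : ℤ) (n : ℤ) (h : a * a + b * b = n) : -n ≤ a ∧ a ≤ n := by
  constructor <;> nlinarith [sq_nonneg (a+1), sq_nonneg (a-1), sq_nonneg b]

lemma mem_sols {n : ℕ} {z : ℤ[i]} : z ∈ sols n ↔ z.norm = (n : ℤ) := by
  unfold sols
  rw [Finset.mem_filter]
  constructor
  · exact fun h => h.2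
  · intro h
    refine ⟨?_, h⟩
    rw [Finset.mem_image]
    refine ⟨(z.re, z.im), ?_, rfl⟩
    rw [Finset.mem_product, Finset.mem_Icc, Finset.mem_Icc]
    rw [Zsqrtd.norm] at h
    simp only [neg_mul, sub_neg_eq_add, one_mul, neg_neg] at h
    have h' : z.re * z.re + z.im * z.im = (n : ℤ) := by linarith [h]
    have h1 := abs_le_of z.re z.im n h'
    have h2 := abs_le_of z.im z.re n (by linarith)
    exact ⟨⟨h1.1, h1.2⟩, ⟨h2.1, h2.2⟩⟩

lemma g_eq (n : ℕ) : g n = (sols n).card := by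
  unfold g
  rw [Nat.card_congr (Equiv.subtypeEquivRight (fun z => mem_sols.symm : ∀ z : ℤ[i], z.norm = (n:ℤ) ↔ z ∈ sols n))]
  exact Nat.card_eq_finsetCard _

lemma g_one : g 1 = 4 := by rw [g_eq]; decide


lemma unit_norm (u : ℤ[i]ˣ) : (u : ℤ[i]).norm = 1 :=
  (Zsqrtd.norm_eq_one_iff' (by norm_num) _).mpr u.isUnit

lemma natCast_norm (t : ℕ) : ((t : ℤ[i])).norm = (t : ℤ) * t := by
  simp [Zsqrtd.norm]

lemma dvd_norm (z : ℤ[i]) : z ∣ ((z.norm : ℤ) : ℤ[i]) :=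
  ⟨star z, Zsqrtd.norm_eq_mul_conj z⟩

lemma norm_dvd_of_dvd {z w : ℤ[i]} (h : z ∣ w) : z.norm ∣ w.norm := by
  obtain ⟨c, rfl⟩ := h
  exact ⟨c.norm, (Zsqrtd.norm_mul _ _)⟩

lemma natAbs_norm_dvd {z w : ℤ[i]} (h : z ∣ w) : z.norm.natAbs ∣ w.norm.natAbs :=
  Int.natAbs_dvd_natAbs.mpr (norm_dvd_of_dvd h)

/-- For a prime `q` of `ℤ[i]`, its norm divides the square of some rational prime. -/
lemma exists_rat_prime (q : ℤ[i]) (hq : Prime q) :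
    ∃ p : ℕ, p.Prime ∧ q.norm.natAbs ∣ p ^ 2 := by
  set k := q.norm.natAbs with hk
  have hk0 : k ≠ 0 := by
    simp only [hk, ne_eq, Int.natAbs_eq_zero, Zsqrtd.norm_eq_zero_iff (by norm_num : (-1:ℤ) < 0)]
    exact hq.ne_zero
  have hqk : q ∣ ((k : ℕ) : ℤ[i]) := by
    have := dvd_norm q
    rwa [← GaussianInt.abs_natCast_norm, Int.cast_natCast] at this
  -- q divides the product of the prime factors of k
  have hfac : ((k : ℕ) : ℤ[i]) = (k.primeFactorsList.map (fun p => ((p:ℕ) : ℤ[i]))).prod := by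
    conv_lhs => rw [← Nat.prod_primeFactorsList hk0]
    push_cast
    rfl
  have hdvd : q ∣ (k.primeFactorsList.map (fun p => ((p:ℕ) : ℤ[i]))).prod := hfac ▸ hqk
  obtain ⟨x, hxl, hqx⟩ := (Prime.dvd_prod_iff hq).mp hdvd
  obtain ⟨p, hpl, rfl⟩ := List.mem_map.mp hxl
  refine ⟨p, Nat.prime_of_mem_primeFactorsList hpl, ?_⟩
  have h2 := natAbs_norm_dvd hqx
  rwa [natCast_norm, ← Int.natCast_mul, Int.natAbs_natCast, ← pow_two] at h2


lemma norm_natAbs_cast (z : ℤ[i]) : ((z.norm.natAbs : ℕ) : ℤ) = z.norm :=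
  GaussianInt.abs_natCast_norm z

lemma split : ∀ (z : ℤ[i]) (m n : ℕ), 0 < m → 0 < n → m.Coprime n →
    z.norm = (m : ℤ) * n → ∃ w1 w2 : ℤ[i], z = w1 * w2 ∧ w1.norm = m ∧ w2.norm = n := by
  intro z
  induction z using WfDvdMonoid.induction_on_irreducible with
  | zero =>
    intro m n hm hn hc h
    exfalso
    rw [Zsqrtd.norm_zero] at h
    have h2 : (0:ℤ) < (m:ℤ) * n := by positivity
    omega
  | unit u hu =>
    intro m n hm hn hc h
    have h1 : u.norm = 1 := (Zsqrtd.norm_eq_one_iff' (by norm_num) _).mpr hu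
    rw [h1] at h
    have h2 : m * n = 1 := by exact_mod_cast h.symm
    obtain rfl := Nat.eq_one_of_mul_eq_one_right h2
    obtain rfl := Nat.eq_one_of_mul_eq_one_left h2
    exact ⟨u, 1, (mul_one u).symm, by rw [h1]; norm_num, by norm_num⟩
  | mul a q ha hq ih =>
    intro m n hm hn hc h
    have hqp : Prime q := hq.prime
    obtain ⟨p, hp, hkp2⟩ := exists_rat_prime q hqp
    set k := q.norm.natAbs with hkdef
    have hk0 : k ≠ 0 := by
      simp only [hkdef, ne_eq, Int.natAbs_eq_zero]
      rw [Zsqrtd.norm_eq_zero_iff (by norm_num : (-1:ℤ) < 0)]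
      exact hqp.ne_zero
    have hk1 : k ≠ 1 := fun h1 => hq.not_isUnit (Zsqrtd.norm_eq_one_iff.mp h1)
    have hdvd_mn : k ∣ m * n := by
      have h2 := natAbs_norm_dvd (Dvd.intro a rfl : q ∣ q * a)
      rw [h] at h2
      rwa [← Nat.cast_mul, Int.natAbs_natCast] at h2
    have hp_dvd : p ∣ k := by
      obtain ⟨i, hi2, hki⟩ := (Nat.dvd_prime_pow hp).mp hkp2
      interval_cases i
      · rw [pow_zero] at hki; exact absurd hki hk1
      · rw [hki]; exact dvd_pow_self p one_ne_zero
      · rw [hki]; exact dvd_pow_self p two_ne_zero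
    have hkey : ∀ m' n' : ℕ, m'.Coprime n' → k ∣ m' * n' → p ∣ m' → k ∣ m' := by
      intro m' n' hc' hdvd hpm
      have hpn' : ¬ p ∣ n' := fun hd => by
        have h1 : p ∣ 1 := hc' ▸ Nat.dvd_gcd hpm hd
        have h2 := hp.two_le
        have h3 := Nat.le_of_dvd one_pos h1
        omega
      have h1 : Nat.Coprime (p^2) n' := ((Nat.Prime.coprime_iff_not_dvd hp).mpr hpn').pow_left _
      exact (Nat.Coprime.coprime_dvd_left hkp2 h1).dvd_of_dvd_mul_right hdvd
    have hnormq : q.norm = (k : ℤ) := (norm_natAbs_cast q).symm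
    have hnorm_split : ∀ t : ℕ, k * t = 0 + k * t := fun t => by ring
    have habs : (q * a).norm = (k : ℤ) * a.norm := by rw [Zsqrtd.norm_mul, hnormq]
    have hkz : (k : ℤ) ≠ 0 := Int.natCast_ne_zero.mpr hk0
    rcases (Nat.Prime.dvd_mul hp).mp (hp_dvd.trans hdvd_mn) with hpm | hpn
    · obtain ⟨m', hmm⟩ := hkey m n hc hdvd_mn hpm
      have hm' : 0 < m' := by
        rcases Nat.eq_zero_or_pos m' with h0 | h0
        · exfalso; rw [h0, Nat.mul_zero] at hmm; omega
        · exact h0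
      have hnorm_a : a.norm = (m' : ℤ) * n := by
        apply mul_left_cancel₀ hkz
        have h2 : (q * a).norm = (k:ℤ) * ((m':ℤ) * n) := by
          rw [h, hmm]; push_cast; ring
        rw [← habs, h2]
      have hc' : m'.Coprime n := Nat.Coprime.coprime_dvd_left ⟨k, by rw [hmm, Nat.mul_comm]⟩ hc
      obtain ⟨w1, w2, rfl, h1, h2⟩ := ih m' n hm' hn hc' hnorm_a
      refine ⟨q * w1, w2, by ring, ?_, h2⟩
      rw [Zsqrtd.norm_mul, hnormq, h1, hmm]; push_cast; ring
    · obtain ⟨n', hnn⟩ := hkey n m hc.symm (Nat.mul_comm m n ▸ hdvd_mn) hpn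
      have hn' : 0 < n' := by
        rcases Nat.eq_zero_or_pos n' with h0 | h0
        · exfalso; rw [h0, Nat.mul_zero] at hnn; omega
        · exact h0
      have hnorm_a : a.norm = (m : ℤ) * n' := by
        apply mul_left_cancel₀ hkz
        have h2 : (q * a).norm = (k:ℤ) * ((m:ℤ) * n') := by
          rw [h, hnn]; push_cast; ring
        rw [← habs, h2]
      have hc' : m.Coprime n' := Nat.Coprime.coprime_dvd_right ⟨k, by rw [hnn, Nat.mul_comm]⟩ hc
      obtain ⟨w1, w2, rfl, h1, h2⟩ := ih m n' hm hn' hc' hnorm_a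
      refine ⟨w1, q * w2, by ring, h1, ?_⟩
      rw [Zsqrtd.norm_mul, hnormq, h2, hnn]; push_cast; ring

lemma assoc_lemma (m n : ℕ) (hc : m.Coprime n) (z1 z2 w1 w2 : ℤ[i])
    (h1 : z1.norm = (m:ℤ)) (h2 : z2.norm = (n:ℤ)) (h1' : w1.norm = (m:ℤ)) (h2' : w2.norm = (n:ℤ))
    (he : z1 * z2 = w1 * w2) : ∃ u : ℤ[i]ˣ, w1 = z1 * u := by
  have hmn : IsCoprime ((m:ℕ) : ℤ[i]) ((n:ℕ) : ℤ[i]) := by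
    have h3 := (Nat.isCoprime_iff_coprime.mpr hc).map (Int.castRingHom ℤ[i])
    simpa using h3
  have dz1 : z1 ∣ ((m:ℕ) : ℤ[i]) := by
    have h3 := dvd_norm z1; rw [h1] at h3; simpa using h3
  have dz2 : z2 ∣ ((n:ℕ) : ℤ[i]) := by
    have h3 := dvd_norm z2; rw [h2] at h3; simpa using h3
  have dw1 : w1 ∣ ((m:ℕ) : ℤ[i]) := by
    have h3 := dvd_norm w1; rw [h1'] at h3; simpa using h3
  have dw2 : w2 ∣ ((n:ℕ) : ℤ[i]) := by
    have h3 := dvd_norm w2; rw [h2'] at h3; simpa using h3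
  have c1 : IsCoprime z1 w2 := (hmn.of_isCoprime_of_dvd_right dw2).of_isCoprime_of_dvd_left dz1
  have c2 : IsCoprime w1 z2 := (hmn.of_isCoprime_of_dvd_right dz2).of_isCoprime_of_dvd_left dw1
  have hd1 : z1 ∣ w1 := c1.dvd_of_dvd_mul_right (he ▸ dvd_mul_right z1 z2)
  have hd2 : w1 ∣ z1 := c2.dvd_of_dvd_mul_right (he ▸ dvd_mul_right w1 w2)
  obtain ⟨u, hu⟩ := associated_of_dvd_dvd hd1 hd2
  exact ⟨u, hu.symm⟩

lemma norm_ne_zero_of_pos {z : ℤ[i]} {t : ℕ} (ht : 0 < t) (h : z.norm = (t:ℤ)) : z ≠ 0 := by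
  intro h0
  rw [h0, Zsqrtd.norm_zero] at h
  have : t = 0 := by exact_mod_cast h.symm
  omega

lemma card_units : Nat.card ℤ[i]ˣ = 4 := by
  let F : ℤ[i]ˣ → {z : ℤ[i] // z.norm = ((1:ℕ):ℤ)} := fun u => ⟨u, by rw [unit_norm]; norm_num⟩
  have hbij : Function.Bijective F := by
    constructor
    · intro u v h
      exact Units.ext (congrArg Subtype.val h)
    · rintro ⟨z, hz⟩
      have hu : IsUnit z := by
        rw [← Zsqrtd.norm_eq_one_iff' (by norm_num : (-1:ℤ) ≤ 0)]
        exact_mod_cast hz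
      obtain ⟨u, rfl⟩ := hu
      exact ⟨u, rfl⟩
  rw [Nat.card_congr (Equiv.ofBijective F hbij)]
  have h4 : g 1 = 4 := g_one
  unfold g at h4
  convert h4 using 3 <;> norm_num

lemma g_mul (m n : ℕ) (hm : 0 < m) (hn : 0 < n) (hc : m.Coprime n) :
    g (m * n) * 4 = g m * g n := by
  have key : ∀ z : {z : ℤ[i] // z.norm = ((m*n : ℕ) : ℤ)},
      ∃ w : ℤ[i] × ℤ[i], (z : ℤ[i]) = w.1 * w.2 ∧ w.1.norm = (m:ℤ) ∧ w.2.norm = (n:ℤ) := by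
    intro z
    obtain ⟨w1, w2, he, h1, h2⟩ := split z.1 m n hm hn hc (by rw [z.2]; push_cast; ring)
    exact ⟨(w1, w2), he, h1, h2⟩
  choose c hce hc1 hc2 using key
  have hcne : ∀ z, (c z).1 ≠ 0 := fun z => norm_ne_zero_of_pos hm (hc1 z)
  let F : {z : ℤ[i] // z.norm = ((m*n:ℕ):ℤ)} × ℤ[i]ˣ →
      {z : ℤ[i] // z.norm = (m:ℤ)} × {z : ℤ[i] // z.norm = (n:ℤ)} :=
    fun zu => (⟨zu.2 * (c zu.1).1, by rw [Zsqrtd.norm_mul, unit_norm, hc1, one_mul]⟩,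
               ⟨((zu.2⁻¹ : ℤ[i]ˣ) : ℤ[i]) * (c zu.1).2, by rw [Zsqrtd.norm_mul, unit_norm, hc2, one_mul]⟩)
  have key1 : ∀ (z : {z : ℤ[i] // z.norm = ((m*n:ℕ):ℤ)}) (u : ℤ[i]ˣ),
      ((u:ℤ[i]) * (c z).1) * (((u⁻¹:ℤ[i]ˣ):ℤ[i]) * (c z).2) = z.1 := by
    intro z u
    rw [mul_mul_mul_comm, ← Units.val_mul, mul_inv_cancel, Units.val_one, one_mul, ← hce z]
  have hbij : Function.Bijective F := by
    constructor
    · rintro ⟨z, u⟩ ⟨z', u'⟩ hFe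
      have e1 : (u:ℤ[i]) * (c z).1 = (u':ℤ[i]) * (c z').1 :=
        congrArg (fun p => p.1.val) hFe
      have e2 : ((u⁻¹:ℤ[i]ˣ):ℤ[i]) * (c z).2 = ((u'⁻¹:ℤ[i]ˣ):ℤ[i]) * (c z').2 :=
        congrArg (fun p => p.2.val) hFe
      have hz : z.1 = z'.1 := by rw [← key1 z u, ← key1 z' u', e1, e2]
      have hzz : z = z' := Subtype.ext hz
      subst hzz
      have hu : (u:ℤ[i]) = (u':ℤ[i]) := mul_right_cancel₀ (hcne z) e1
      rw [Prod.ext_iff]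
      exact ⟨rfl, Units.ext hu⟩
    · rintro ⟨⟨w1, hw1⟩, ⟨w2, hw2⟩⟩
      have hz : (w1 * w2).norm = ((m*n:ℕ):ℤ) := by
        rw [Zsqrtd.norm_mul, hw1, hw2]; push_cast; ring
      set z : {z : ℤ[i] // z.norm = ((m*n:ℕ):ℤ)} := ⟨w1 * w2, hz⟩ with hzdef
      have he : (c z).1 * (c z).2 = w1 * w2 := (hce z).symm
      obtain ⟨u, hu⟩ := assoc_lemma m n hc (c z).1 (c z).2 w1 w2 (hc1 z) (hc2 z) hw1 hw2 he
      refine ⟨(z, u), ?_⟩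
      have hcomp1 : (u:ℤ[i]) * (c z).1 = w1 := by rw [hu]; ring
      have hcomp2 : ((u⁻¹:ℤ[i]ˣ):ℤ[i]) * (c z).2 = w2 := by
        have h5 : (c z).1 * (c z).2 = (c z).1 * ((u:ℤ[i]) * w2) := by
          rw [he, hu]; ring
        have h6 : (c z).2 = (u:ℤ[i]) * w2 := mul_left_cancel₀ (hcne z) h5
        rw [h6, ← mul_assoc, ← Units.val_mul, inv_mul_cancel, Units.val_one, one_mul]
      rw [Prod.ext_iff]
      exact ⟨Subtype.ext hcomp1, Subtype.ext hcomp2⟩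
  have hcard := Nat.card_congr (Equiv.ofBijective F hbij)
  rw [Nat.card_prod, Nat.card_prod, card_units] at hcard
  exact hcard

lemma norm_pow (z : ℤ[i]) (k : ℕ) : (z ^ k).norm = z.norm ^ k :=
  map_pow (Zsqrtd.normMonoidHom : ℤ[i] →* ℤ) z k

lemma norm_re_im (z : ℤ[i]) : z.norm = z.re * z.re + z.im * z.im := by
  rw [Zsqrtd.norm]; ring

lemma one_one_ne : (⟨1,1⟩ : ℤ[i]) ≠ 0 := by
  intro h
  simpa using congrArg Zsqrtd.re h

lemma norm_one_one : (⟨1,1⟩ : ℤ[i]).norm = 2 := by rw [norm_mk]; norm_num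

lemma pow_two_aux : ∀ (k : ℕ) (z : ℤ[i]), z.norm = 2 ^ k →
    ∃ w : ℤ[i], w.norm = 1 ∧ z = w * (⟨1,1⟩ : ℤ[i]) ^ k := by
  intro k
  induction k with
  | zero => intro z h; exact ⟨z, by simpa using h, by simp⟩
  | succ k ih =>
    intro z h
    have hpar : Even (z.re + z.im) := by
      have h2 : Even (z.re * z.re + z.im * z.im) := by
        rw [← norm_re_im, h]
        exact ⟨2 ^ k, by ring⟩
      simp only [Int.even_add, Int.even_mul, or_self] at h2 ⊢
      tauto
    obtain ⟨x, hx⟩ := hpar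
    set w' : ℤ[i] := ⟨x, z.im - x⟩ with hw'
    have hzw : z = (⟨1,1⟩ : ℤ[i]) * w' := by
      have hre : ((⟨1,1⟩ : ℤ[i]) * w').re = z.re := by
        simp [hw', Zsqrtd.re_mul]
        omega
      have him : ((⟨1,1⟩ : ℤ[i]) * w').im = z.im := by
        simp [hw', Zsqrtd.im_mul]
      exact (Zsqrtd.ext hre him).symm
    have hnw' : w'.norm = 2 ^ k := by
      apply mul_left_cancel₀ (show (2:ℤ) ≠ 0 by norm_num)
      rw [show (2:ℤ) * w'.norm = ((⟨1,1⟩:ℤ[i]) * w').norm by rw [Zsqrtd.norm_mul, norm_one_one]]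
      rw [← hzw, h]
      ring
    obtain ⟨w, hw1, hw2⟩ := ih w' hnw'
    exact ⟨w, hw1, by rw [hzw, hw2]; ring⟩

lemma g_of_unit_mul (t : ℕ) (c : ℤ[i]) (hc : c ≠ 0) (hnc : c.norm = (t:ℤ))
    (hstruct : ∀ z : ℤ[i], z.norm = (t:ℤ) → ∃ w, w.norm = 1 ∧ z = w * c) : g t = 4 := by
  let F : {z : ℤ[i] // z.norm = ((1:ℕ):ℤ)} → {z : ℤ[i] // z.norm = (t:ℤ)} :=
    fun w => ⟨w.1 * c, by rw [Zsqrtd.norm_mul, hnc, w.2]; norm_num⟩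
  have hbij : Function.Bijective F := by
    constructor
    · rintro ⟨w, hw⟩ ⟨w', hw'⟩ he
      have h1 : w * c = w' * c := congrArg Subtype.val he
      exact Subtype.ext (mul_right_cancel₀ hc h1)
    · rintro ⟨z, hz⟩
      obtain ⟨w, hw1, hw2⟩ := hstruct z hz
      exact ⟨⟨w, by rw [hw1]; norm_num⟩, Subtype.ext hw2.symm⟩
  have h4 : Nat.card {z : ℤ[i] // z.norm = ((1:ℕ):ℤ)} = 4 := g_one
  unfold g
  rw [← Nat.card_congr (Equiv.ofBijective F hbij), h4]

lemma g_two_pow (k : ℕ) : g (2 ^ k) = 4 := by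
  apply g_of_unit_mul _ ((⟨1,1⟩ : ℤ[i]) ^ k) (pow_ne_zero _ one_one_ne)
  · rw [norm_pow, norm_one_one]; push_cast; ring
  · intro z hz
    apply pow_two_aux k z
    rw [hz]; push_cast; ring

section POdd

variable (p : ℕ)

lemma p3_struct (hp : p.Prime) (hp3 : p % 4 = 3) : ∀ (j : ℕ) (z : ℤ[i]), z.norm = (p:ℤ) ^ j →
    j % 2 = 0 ∧ ∃ w : ℤ[i], w.norm = 1 ∧ z = w * ((p:ℕ) : ℤ[i]) ^ (j / 2) := by
  haveI : Fact p.Prime := ⟨hp⟩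
  have hq : Prime ((p:ℕ) : ℤ[i]) := GaussianInt.prime_of_nat_prime_of_mod_four_eq_three p hp3
  have hp2 := hp.two_le
  intro j
  induction j using Nat.strong_induction_on with
  | _ j ih =>
    rcases j with _ | j
    · intro z h
      exact ⟨rfl, z, by simpa using h, by simp⟩
    intro z h
    have hdvd : ((p:ℕ):ℤ[i]) ∣ z := by
      have h1 : ((p:ℕ):ℤ[i]) ∣ z * star z := by
        rw [← Zsqrtd.norm_eq_mul_conj, h]
        push_cast
        exact dvd_pow_self _ (Nat.succ_ne_zero j)
      rcases hq.2.2 z (star z) h1 with h2 | h2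
      · exact h2
      · obtain ⟨v, hv⟩ := h2
        exact ⟨star v, by simpa using congrArg star hv⟩
    obtain ⟨w', rfl⟩ := hdvd
    have heq : (p:ℤ)^2 * w'.norm = (p:ℤ) ^ (j+1) := by
      rw [← h, Zsqrtd.norm_mul, natCast_norm]; ring
    rcases j with _ | j
    · exfalso
      have hd : (p:ℤ)^2 ∣ (p:ℤ)^1 := ⟨w'.norm, by rw [← heq]⟩
      have hle : (p:ℤ)^2 ≤ (p:ℤ)^1 := Int.le_of_dvd (by positivity) hd
      have : (2:ℤ) ≤ (p:ℤ) := by exact_mod_cast hp2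
      nlinarith
    · have hnw' : w'.norm = (p:ℤ) ^ j := by
        apply mul_left_cancel₀ (show ((p:ℤ))^2 ≠ 0 by positivity)
        rw [heq]; ring
      obtain ⟨hj, w, hw1, hw2⟩ := ih j (by omega) w' hnw'
      refine ⟨by omega, w, hw1, ?_⟩
      rw [hw2]
      rw [show (j + 1 + 1) / 2 = j / 2 + 1 by omega, pow_succ]
      ring

lemma g_p3_even (hp : p.Prime) (hp3 : p % 4 = 3) (j : ℕ) (hj : j % 2 = 0) : g (p ^ j) = 4 := by
  have hpz : ((p:ℕ) : ℤ[i]) ≠ 0 := by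
    intro h0
    have := congrArg Zsqrtd.re h0
    simp at this
    omega
  apply g_of_unit_mul _ (((p:ℕ) : ℤ[i]) ^ (j/2)) (pow_ne_zero _ hpz)
  · rw [norm_pow, natCast_norm]
    push_cast
    rw [← pow_two]
    rw [← pow_mul]
    congr 1
    omega
  · intro z hz
    have h2 := p3_struct p hp hp3 j z (by rw [hz]; push_cast; ring)
    exact h2.2

lemma g_p3_odd (hp : p.Prime) (hp3 : p % 4 = 3) (j : ℕ) (hj : j % 2 = 1) : g (p ^ j) = 0 := by
  unfold g
  rw [Nat.card_eq_zero]
  left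
  constructor
  intro z
  have h2 := p3_struct p hp hp3 j z (by rw [z.2]; push_cast; ring)
  omega

end POdd

lemma prime_of_norm_prime (z : ℤ[i]) (hp : z.norm.natAbs.Prime) : Prime z := by
  have hirr : Irreducible z := by
    constructor
    · intro hu
      have h1 := Zsqrtd.norm_eq_one_iff.mpr hu
      have := hp.one_lt
      omega
    · intro x y hxy
      have hmul : x.norm.natAbs * y.norm.natAbs = z.norm.natAbs := by
        rw [hxy, Zsqrtd.norm_mul, Int.natAbs_mul]
      rcases hp.eq_one_or_self_of_dvd x.norm.natAbs ⟨y.norm.natAbs, hmul.symm⟩ with h1 | h1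
      · exact Or.inl (Zsqrtd.norm_eq_one_iff.mp h1)
      · right
        apply Zsqrtd.norm_eq_one_iff.mp
        have hpn := hp.pos
        rw [h1] at hmul
        nlinarith [hmul]
  exact hirr.prime

lemma g_p1 (p : ℕ) (hp : p.Prime) (hp1 : p % 4 = 1) (k : ℕ) : g (p ^ k) = 4 * (k + 1) := by
  haveI : Fact p.Prime := ⟨hp⟩
  have hp2 := hp.two_le
  have hnotirr : ¬ Irreducible ((p:ℕ) : ℤ[i]) := by
    intro hirr
    have h3 := GaussianInt.mod_four_eq_three_of_nat_prime_of_prime p hirr.prime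
    omega
  obtain ⟨a, b, hab⟩ := GaussianInt.sq_add_sq_of_nat_prime_of_not_irreducible p hnotirr
  set π : ℤ[i] := ⟨(a:ℤ), (b:ℤ)⟩ with hπdef
  have hnπ : π.norm = (p:ℤ) := by
    rw [norm_mk]
    push_cast [← hab]
    ring
  have hnπs : (star π).norm = (p:ℤ) := by rw [Zsqrtd.norm_conj, hnπ]
  have hπprime : Prime π := prime_of_norm_prime π (by rw [hnπ]; simpa using hp)
  have hπsprime : Prime (star π) := prime_of_norm_prime _ (by rw [hnπs]; simpa using hp)
  have hπ0 : π ≠ 0 := hπprime.ne_zero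
  have hπs0 : star π ≠ 0 := hπsprime.ne_zero
  have ha0 : a ≠ 0 := by
    rintro rfl
    simp only [pow_two] at hab
    have hd : b ∣ p := ⟨b, by omega⟩
    rcases hp.eq_one_or_self_of_dvd b hd with h1 | h1 <;> simp [h1] at hab <;> nlinarith
  have hb0 : b ≠ 0 := by
    rintro rfl
    simp only [pow_two] at hab
    have hd : a ∣ p := ⟨a, by omega⟩
    rcases hp.eq_one_or_self_of_dvd a hd with h1 | h1 <;> simp [h1] at hab <;> nlinarith
  have hnd : ¬ π ∣ star π := by
    intro hdvd
    have hsum : π + star π = ((2*a : ℕ) : ℤ[i]) := by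
      have hre : (π + star π).re = ((2*a : ℕ) : ℤ[i]).re := by
        simp [hπdef]
        push_cast
        ring
      have him : (π + star π).im = ((2*a : ℕ) : ℤ[i]).im := by
        simp [hπdef]
      exact Zsqrtd.ext hre him
    have h1 : π ∣ ((2*a : ℕ) : ℤ[i]) := hsum ▸ dvd_add dvd_rfl hdvd
    have h2 := natAbs_norm_dvd h1
    rw [hnπ, natCast_norm] at h2
    simp only [Int.natAbs_natCast, ← Nat.cast_mul, Int.natAbs_natCast] at h2
    have h3 : p ∣ 2 * a * (2 * a) := h2
    have h4 : p ∣ 2 * a := by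
      rcases (Nat.Prime.dvd_mul hp).mp h3 with h | h <;> exact h
    have h5 : p ∣ a := by
      rcases (Nat.Prime.dvd_mul hp).mp h4 with h | h
      · exfalso
        have := Nat.le_of_dvd (by norm_num) h
        omega
      · exact h
    have h6 : p ≤ a := Nat.le_of_dvd (Nat.pos_of_ne_zero ha0) h5
    have hb1 : 1 ≤ b := Nat.pos_of_ne_zero hb0
    nlinarith [hab]
  have hps : π * star π = ((p:ℕ) : ℤ[i]) := by
    have h0 := (Zsqrtd.norm_eq_mul_conj π).symm
    rw [hnπ] at h0
    rw [h0]
    push_cast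
    ring
  have hstruct : ∀ (j : ℕ) (z : ℤ[i]), z.norm = (p:ℤ)^j →
      ∃ (i : ℕ) (w : ℤ[i]), i ≤ j ∧ w.norm = 1 ∧ z = w * π ^ i * (star π) ^ (j - i) := by
    intro j
    induction j with
    | zero => intro z h; exact ⟨0, z, le_refl 0, by simpa using h, by simp⟩
    | succ j ih =>
      intro z h
      have h1 : π ∣ z * star z := by
        rw [← Zsqrtd.norm_eq_mul_conj, h]
        have hc2 : (((p:ℤ)^(j+1) : ℤ) : ℤ[i]) = (π * star π)^(j+1) := by
          rw [hps]
          push_cast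
          ring
        rw [hc2]
        exact dvd_pow (dvd_mul_right π (star π)) (Nat.succ_ne_zero j)
      rcases hπprime.2.2 z (star z) h1 with h2 | h2
      · obtain ⟨w', rfl⟩ := h2
        have hnw' : w'.norm = (p:ℤ)^j := by
          apply mul_left_cancel₀ (show (p:ℤ) ≠ 0 by positivity)
          rw [← hnπ, ← Zsqrtd.norm_mul, h, hnπ]
          ring
        obtain ⟨i, w, hij, hw1, hw2⟩ := ih w' hnw'
        refine ⟨i+1, w, by omega, hw1, ?_⟩
        rw [hw2, show j + 1 - (i+1) = j - i by omega, pow_succ]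
        ring
      · obtain ⟨v, hv⟩ := h2
        have hv2 : z = star π * star v := by
          have h5 := congrArg star hv
          simp only [star_star, star_mul] at h5
          rw [h5]
          ring
        subst hv2
        have hnw' : (star v).norm = (p:ℤ)^j := by
          apply mul_left_cancel₀ (show (p:ℤ) ≠ 0 by positivity)
          rw [← hnπs, ← Zsqrtd.norm_mul, h, hnπs]
          ring
        obtain ⟨i, w, hij, hw1, hw2⟩ := ih (star v) hnw'
        refine ⟨i, w, by omega, hw1, ?_⟩
        rw [hw2, show j + 1 - i = (j - i) + 1 by omega, pow_succ]
        ring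
  have hinj_help : ∀ (w w' : ℤ[i]) (i i' : ℕ), w.norm = 1 → w'.norm = 1 → i < i' → i' ≤ k →
      w * π ^ i * (star π) ^ (k - i) ≠ w' * π ^ i' * (star π) ^ (k - i') := by
    intro w w' i i' hw hw' hii hik heq
    set t := i' - i with ht
    have ht1 : 1 ≤ t := by omega
    have hA : π ^ i * (star π) ^ (k - i') ≠ 0 :=
      mul_ne_zero (pow_ne_zero _ hπ0) (pow_ne_zero _ hπs0)
    have hstep : w * (star π) ^ t = w' * π ^ t := by
      apply mul_left_cancel₀ hA
      calc π^i * (star π)^(k-i') * (w * (star π)^t)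
          = w * π^i * (star π)^(k-i) := by
            rw [show k - i = (k-i') + t by omega, pow_add]
            ring
        _ = w' * π^i' * (star π)^(k-i') := heq
        _ = π^i * (star π)^(k-i') * (w' * π^t) := by
            rw [show i' = i + t by omega, pow_add]
            ring
    have hdvd : π ∣ w * (star π)^t := by
      rw [hstep]
      exact dvd_mul_of_dvd_right (dvd_pow_self π (by omega)) w'
    rcases hπprime.2.2 _ _ hdvd with h4 | h4
    · exact hπprime.not_unit
        (isUnit_of_dvd_unit h4 ((Zsqrtd.norm_eq_one_iff' (by norm_num) w).mp hw))
    · exact hnd (hπprime.dvd_of_dvd_pow h4)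
  let F : {z : ℤ[i] // z.norm = ((1:ℕ):ℤ)} × Fin (k+1) → {z : ℤ[i] // z.norm = ((p^k : ℕ):ℤ)} :=
    fun wi => ⟨wi.1.1 * π ^ (wi.2 : ℕ) * (star π) ^ (k - (wi.2 : ℕ)), by
      rw [Zsqrtd.norm_mul, Zsqrtd.norm_mul, norm_pow, norm_pow, hnπ, hnπs, wi.1.2]
      push_cast
      rw [one_mul, ← pow_add]
      congr 1
      have := wi.2.isLt
      omega⟩
  have hbij : Function.Bijective F := by
    constructor
    · rintro ⟨⟨w, hw⟩, i⟩ ⟨⟨w', hw'⟩, i'⟩ he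
      have heq : w * π ^ (i:ℕ) * (star π) ^ (k - (i:ℕ)) = w' * π ^ (i':ℕ) * (star π) ^ (k - (i':ℕ)) :=
        congrArg Subtype.val he
      have hw1 : w.norm = 1 := by exact_mod_cast hw
      have hw1' : w'.norm = 1 := by exact_mod_cast hw'
      have hik : (i:ℕ) ≤ k := by have := i.isLt; omega
      have hik' : (i':ℕ) ≤ k := by have := i'.isLt; omega
      rcases lt_trichotomy (i:ℕ) (i':ℕ) with h | h | h
      · exact absurd heq (hinj_help w w' i i' hw1 hw1' h hik')
      · have hii : i = i' := Fin.ext h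
        subst hii
        have hww : w = w' := by
          have h5 := mul_right_cancel₀ (pow_ne_zero _ hπs0) heq
          exact mul_right_cancel₀ (pow_ne_zero _ hπ0) h5
        subst hww
        rfl
      · exact absurd heq.symm (hinj_help w' w i' i hw1' hw1 h hik)
    · rintro ⟨z, hz⟩
      obtain ⟨i, w, hik, hw1, hw2⟩ := hstruct k z (by rw [hz]; push_cast; ring)
      exact ⟨(⟨w, by exact_mod_cast hw1⟩, ⟨i, by omega⟩), Subtype.ext hw2.symm⟩
  have hcard := Nat.card_congr (Equiv.ofBijective F hbij)
  rw [Nat.card_prod] at hcard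
  have h4 : Nat.card {z : ℤ[i] // z.norm = ((1:ℕ):ℤ)} = 4 := g_one
  unfold g
  rw [← hcard, h4, Nat.card_eq_fintype_card, Fintype.card_fin]

lemma chi_one : χ 1 = 1 := by norm_num [χ]

lemma chi_two_pow (j : ℕ) : χ (2 ^ j) = if j = 0 then 1 else 0 := by
  rcases j with _ | j
  · simpa using chi_one
  rcases j with _ | j
  · norm_num [χ]
  · have h4 : 2 ^ (j + 1 + 1) % 4 = 0 := by
      have hd : (4:ℕ) ∣ 2 ^ (j+1+1) := ⟨2^j, by ring⟩
      omega
    unfold χ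
    rw [h4]
    norm_num

lemma three_pow_mod (j : ℕ) : 3 ^ j % 4 = if j % 2 = 0 then 1 else 3 := by
  induction j with
  | zero => norm_num
  | succ j ih =>
    rw [pow_succ, Nat.mul_mod, ih]
    by_cases h : j % 2 = 0
    · simp only [h, if_true]
      rw [show (j+1) % 2 = 1 by omega]
      norm_num
    · simp only [h, if_false]
      rw [show (j+1) % 2 = 0 by omega]
      norm_num

lemma chi_p1_pow (p : ℕ) (hp1 : p % 4 = 1) (j : ℕ) : χ (p ^ j) = 1 := by
  unfold χ
  rw [Nat.pow_mod, hp1]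
  simp

lemma chi_p3_pow (p : ℕ) (hp3 : p % 4 = 3) (j : ℕ) : χ (p ^ j) = if j % 2 = 0 then 1 else -1 := by
  unfold χ
  rw [Nat.pow_mod, hp3, three_pow_mod]
  by_cases h : j % 2 = 0 <;> simp [h]

lemma sum_pm (k : ℕ) : ∑ j ∈ Finset.range (k+1), (if j % 2 = 0 then (1:ℤ) else -1)
    = if k % 2 = 0 then 1 else 0 := by
  induction k with
  | zero => norm_num
  | succ k ih =>
    rw [Finset.sum_range_succ, ih]
    by_cases h : k % 2 = 0
    · rw [if_pos h, if_neg (by omega), if_neg (by omega)]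
      norm_num
    · rw [if_neg h, if_pos (by omega), if_pos (by omega)]
      norm_num

def χA : ArithmeticFunction ℤ := ⟨fun d => χ d, by norm_num [χ]⟩

lemma χA_mult : χA.IsMultiplicative :=
  ⟨chi_one, fun {m n} _ => chi_mul m n⟩

lemma H_mul (m n : ℕ) (hc : m.Coprime n) :
    ∑ d ∈ (m*n).divisors, χ d = (∑ d ∈ m.divisors, χ d) * (∑ d ∈ n.divisors, χ d) := by
  have h1 : ∀ t : ℕ, ∑ d ∈ t.divisors, χ d = ((ArithmeticFunction.zeta : ArithmeticFunction ℕ) * χA) t :=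
    fun t => by
      rw [ArithmeticFunction.coe_zeta_mul_apply]
      simp only [χA, ArithmeticFunction.coe_mk]
  rw [h1, h1, h1]
  exact (ArithmeticFunction.isMultiplicative_zeta.natCast.mul χA_mult).2 hc

lemma master : ∀ n : ℕ, 0 < n → (g n : ℤ) = 4 * ∑ d ∈ n.divisors, χ d := by
  intro n
  induction n using Nat.recOnPosPrimePosCoprime with
  | prime_pow p k hp hk =>
    intro _
    have hpp : p.Prime := hp
    rw [Nat.sum_divisors_prime_pow hpp]
    by_cases hp2 : p = 2
    · subst hp2
      rw [g_two_pow]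
      have hs : ∑ i ∈ Finset.range (k+1), χ (2 ^ i) = 1 := by
        rw [Finset.sum_congr rfl (fun i _ => chi_two_pow i)]
        simp
      rw [hs]
      norm_num
    · have hodd : p % 2 = 1 := by
        rcases hpp.eq_two_or_odd with h | h
        · exact absurd h hp2
        · exact h
      have h14 : p % 4 = 1 ∨ p % 4 = 3 := by omega
      rcases h14 with h1 | h3
      · rw [g_p1 p hpp h1 k]
        rw [Finset.sum_congr rfl (fun i _ => chi_p1_pow p h1 i)]
        simp only [Finset.sum_const, Finset.card_range, nsmul_eq_mul, mul_one]
        push_cast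
        ring
      · rw [Finset.sum_congr rfl (fun i _ => chi_p3_pow p h3 i), sum_pm]
        by_cases hke : k % 2 = 0
        · rw [g_p3_even p hpp h3 k hke, if_pos hke]
          norm_num
        · rw [g_p3_odd p hpp h3 k (by omega), if_neg hke]
          norm_num
  | zero => intro h; omega
  | one =>
    intro _
    rw [g_one]
    simp [chi_one]
  | coprime a b ha hb hab iha ihb =>
    intro _
    have hga := iha (by omega)
    have hgb := ihb (by omega)
    have hmul := g_mul a b (by omega) (by omega) hab
    have hz : ((g (a*b) : ℤ)) * 4 = (g a : ℤ) * g b := by exact_mod_cast hmul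
    rw [hga, hgb] at hz
    have h5 : (g (a*b) : ℤ) * 4 = (4 * ∑ d ∈ (a*b).divisors, χ d) * 4 := by
      rw [hz, H_mul a b hab]
      ring
    exact mul_right_cancel₀ (by norm_num) h5

end Jacobi

theorem jacobi_two_squares (n : ℕ) (hn : 0 < n) :
    (rsq 2 n : ℤ) =
      4 * (((n.divisors.filter (fun d => d % 4 = 1)).card : ℤ) -
           ((n.divisors.filter (fun d => d % 4 = 3)).card : ℤ)) := by
  have hr : rsq 2 n = Jacobi.g n := by
    unfold rsq Jacobi.g
    apply Nat.card_congr
    refine ⟨fun v => ⟨⟨v.1 0, v.1 1⟩, ?_⟩, fun z => ⟨![z.1.re, z.1.im], ?_⟩, ?_, ?_⟩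
    · rw [Jacobi.norm_mk]
      have h2 := v.2
      rw [Fin.sum_univ_two] at h2
      linear_combination h2
    · rw [Fin.sum_univ_two]
      simp only [Matrix.cons_val_zero, Matrix.cons_val_one, Matrix.head_cons]
      have h2 := z.2
      rw [Jacobi.norm_re_im] at h2
      linear_combination h2
    · intro v
      apply Subtype.ext
      funext i
      fin_cases i <;> rfl
    · intro z
      apply Subtype.ext
      exact Zsqrtd.ext rfl rfl
  rw [hr, Jacobi.master n hn]
  congr 1
  have hsplit : ∀ d : ℕ, Jacobi.χ d = (if d % 4 = 1 then (1:ℤ) else 0) - (if d % 4 = 3 then 1 else 0) := by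
    intro d
    unfold Jacobi.χ
    split_ifs <;> omega
  rw [Finset.sum_congr rfl (fun d _ => hsplit d), Finset.sum_sub_distrib,
    Finset.sum_boole, Finset.sum_boole]
end

section
/- Quadratic transformation: for |z| < 1 with |4z/(1+z)^2| < 1, ₂F₁(a, b; a−b+1; z) = (1+z)^{−a} ₂F₁(a/2, (a+1)/2; a−b+1; 4z/(1+z)^2). -/
open scoped Real

open Polynomial Finset

/-- Modified Bessel function of the first kind (principal branch). -/
noncomputable def besselI (ν z : ℂ) : ℂ :=
  ∑' m : ℕ, (z / 2) ^ (2 * (m : ℂ) + ν) / ((m.factorial : ℂ) * Complex.Gamma ((m : ℂ) + 1 + ν))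

/-- Modified Bessel function of the second kind. -/
noncomputable def besselK (ν z : ℂ) : ℂ :=
  (↑Real.pi / 2) * (besselI (-ν) z - besselI ν z) / Complex.sin (ν * ↑Real.pi)

/-- Gauss hypergeometric function ₂F₁, defined by its power series. -/
noncomputable def hyp2F1 (a b c z : ℂ) : ℂ :=
  ∑' n : ℕ, ((ascPochhammer ℂ n).eval a * (ascPochhammer ℂ n).eval b) /
    ((ascPochhammer ℂ n).eval c * (n.factorial : ℂ)) * z ^ n

noncomputable def poch (x : ℂ) (n : ℕ) : ℂ := (ascPochhammer ℂ n).eval x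

lemma poch_zero (x : ℂ) : poch x 0 = 1 := by simp [poch]

lemma poch_succ (x : ℂ) (n : ℕ) : poch x (n + 1) = poch x n * (x + n) := by
  simp [poch, ascPochhammer_succ_right]

lemma poch_ne_zero {x : ℂ} (hx : ∀ n : ℕ, x ≠ -(n : ℂ)) (n : ℕ) : poch x n ≠ 0 := by
  induction n with
  | zero => simp [poch_zero]
  | succ n ih =>
    rw [poch_succ]
    refine mul_ne_zero ih ?_
    intro h
    exact hx n (by linear_combination h)

lemma poch_add (x : ℂ) (n m : ℕ) : poch x (n + m) = poch x n * poch (x + n) m := by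
  have := congrArg (Polynomial.eval x) (ascPochhammer_mul ℂ n m)
  simpa [poch, Polynomial.eval_comp] using this.symm

lemma poch_dup (x : ℂ) (n : ℕ) :
    poch x (2 * n) = 4 ^ n * poch (x / 2) n * poch ((x + 1) / 2) n := by
  induction n with
  | zero => simp [poch_zero]
  | succ n ih =>
    have h2 : 2 * (n + 1) = (2 * n + 1) + 1 := by ring
    rw [h2, poch_succ, poch_succ, ih, poch_succ, poch_succ]
    push_cast
    ring

-- (-1)^k * poch y k = poch (-y - k + 1) k
lemma neg_one_pow_mul_poch (y : ℂ) (k : ℕ) :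
    (-1) ^ k * poch y k = poch (-y - k + 1) k := by
  have h1 := ascPochhammer_eval_neg_eq_descPochhammer ℂ (-y) k
  have h2 := descPochhammer_eval_eq_ascPochhammer ℂ (-y) k
  simp only [neg_neg] at h1
  rw [h2] at h1
  unfold poch
  rw [h1]
  rw [← mul_assoc, ← pow_add, ← two_mul, pow_mul]
  simp

lemma desc_smeval_eq_eval (k : ℕ) (x : ℂ) :
    (descPochhammer ℤ k).smeval x = (descPochhammer ℂ k).eval x := by
  rw [← Polynomial.eval₂_smulOneHom_eq_smeval,
    show (RingHom.smulOneHom : ℤ →+* ℂ) = Int.castRingHom ℂ from Subsingleton.elim _ _,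
    Polynomial.eval₂_eq_eval_map, descPochhammer_map]

lemma desc_eval_neg (x : ℂ) (k : ℕ) :
    (descPochhammer ℂ k).eval (-x) = (-1) ^ k * poch x k := by
  have h := ascPochhammer_eval_neg_eq_descPochhammer ℂ (-x) k
  simp only [neg_neg] at h
  have : ((-1 : ℂ)) ^ k * (-1 : ℂ) ^ k = 1 := by
    rw [← pow_add, ← two_mul, pow_mul]; simp
  calc (descPochhammer ℂ k).eval (-x)
      = ((-1:ℂ)^k * (-1:ℂ)^k) * (descPochhammer ℂ k).eval (-x) := by rw [this, one_mul]
    _ = (-1:ℂ)^k * poch x k := by rw [mul_assoc, ← h]; rfl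

lemma poch_vandermonde (x y : ℂ) (m : ℕ) :
    poch (x + y) m =
      ∑ ij ∈ Finset.HasAntidiagonal.antidiagonal m, (m.choose ij.1 : ℂ) * (poch x ij.1 * poch y ij.2) := by
  have h := Ring.descPochhammer_smeval_add (R := ℂ) (r := -x) (s := -y) m (Commute.all _ _)
  simp only [desc_smeval_eq_eval, show (-x + -y : ℂ) = -(x+y) by ring] at h
  rw [desc_eval_neg] at h
  have h2 : ∀ ij ∈ Finset.HasAntidiagonal.antidiagonal m,
      (m.choose ij.1 : ℂ) * ((descPochhammer ℂ ij.1).eval (-x) * (descPochhammer ℂ ij.2).eval (-y))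
      = (-1:ℂ)^m * ((m.choose ij.1 : ℂ) * (poch x ij.1 * poch y ij.2)) := by
    intro ij hij
    rw [desc_eval_neg, desc_eval_neg]
    rw [Finset.HasAntidiagonal.mem_antidiagonal] at hij
    rw [← hij, pow_add]
    ring
  rw [Finset.sum_congr rfl h2, ← Finset.mul_sum] at h
  have hne : ((-1:ℂ))^m ≠ 0 := by simp
  exact mul_left_cancel₀ hne h

lemma key_identity (a b : ℂ) (m : ℕ) :
    ∑ ij ∈ Finset.HasAntidiagonal.antidiagonal m,
      (m.choose ij.1 : ℂ) * poch a (m + ij.1) * ((-1) ^ ij.2 * poch ((a - b + 1) + ij.1) ij.2)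
      = poch a m * poch b m := by
  have h2 : ∀ ij ∈ Finset.HasAntidiagonal.antidiagonal m,
      (m.choose ij.1 : ℂ) * poch a (m + ij.1) * ((-1) ^ ij.2 * poch ((a - b + 1) + ij.1) ij.2)
      = poch a m * ((m.choose ij.1 : ℂ) * (poch (a + m) ij.1 * poch (b - a - m) ij.2)) := by
    intro ij hij
    rw [Finset.HasAntidiagonal.mem_antidiagonal] at hij
    rw [neg_one_pow_mul_poch]
    rw [show poch a (m + ij.1) = poch a m * poch (a + m) ij.1 from poch_add a m ij.1]
    rw [show (-((a - b + 1) + ij.1) - ij.2 + 1 : ℂ) = b - a - m by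
      have : ((ij.1 : ℂ) + ij.2) = (m : ℂ) := by exact_mod_cast congrArg (Nat.cast : ℕ → ℂ) hij
      linear_combination -this]
    ring
  rw [Finset.sum_congr rfl h2, ← Finset.mul_sum, ← poch_vandermonde]
  congr 1
  ring_nf

lemma coeff_identity (a b : ℂ) (hc : ∀ n : ℕ, a - b + 1 ≠ -(n : ℂ)) (m : ℕ) :
    ∑ ij ∈ Finset.HasAntidiagonal.antidiagonal m,
      (poch (a/2) ij.1 * poch ((a+1)/2) ij.1 / (poch (a-b+1) ij.1 * (ij.1.factorial : ℂ))) *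
        4 ^ ij.1 * (poch (a + 2*ij.1) ij.2 * (-1) ^ ij.2 / (ij.2.factorial : ℂ))
      = poch a m * poch b m / (poch (a-b+1) m * (m.factorial : ℂ)) := by
  set c : ℂ := a - b + 1 with hcdef
  have hterm : ∀ ij ∈ Finset.HasAntidiagonal.antidiagonal m,
      (poch (a/2) ij.1 * poch ((a+1)/2) ij.1 / (poch c ij.1 * (ij.1.factorial : ℂ))) *
        4 ^ ij.1 * (poch (a + 2*ij.1) ij.2 * (-1) ^ ij.2 / (ij.2.factorial : ℂ))
      = ((m.choose ij.1 : ℂ) * poch a (m + ij.1) * ((-1) ^ ij.2 * poch (c + ij.1) ij.2)) /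
          (poch c m * (m.factorial : ℂ)) := by
    intro ⟨n, j⟩ hij
    rw [Finset.HasAntidiagonal.mem_antidiagonal] at hij
    simp only
    have hnum : poch (a/2) n * poch ((a+1)/2) n * 4 ^ n * poch (a + 2*n) j
        = poch a (m + n) := by
      have hd := poch_dup a n
      have ha : poch a (m + n) = poch a (2*n) * poch (a + (2*n : ℕ)) j := by
        rw [show m + n = 2*n + j by omega]; exact poch_add a (2*n) j
      rw [ha, hd]
      push_cast
      ring
    have hfac : (m.factorial : ℂ) = (m.choose n : ℂ) * ((n.factorial : ℂ) * (j.factorial : ℂ)) := by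
      have := Nat.choose_mul_factorial_mul_factorial (show n ≤ m by omega)
      rw [show m - n = j by omega] at this
      push_cast [← this]
      ring
    have hpc : poch c m = poch c n * poch (c + n) j := by
      rw [show m = n + j from hij.symm]; exact poch_add c n j
    have h1 : poch c n ≠ 0 := poch_ne_zero hc n
    have h2 : poch (c + n) j ≠ 0 := by
      intro h; apply poch_ne_zero hc m; rw [hpc, h, mul_zero]
    have h3 : (n.factorial : ℂ) ≠ 0 := Nat.cast_ne_zero.mpr n.factorial_ne_zero
    have h4 : (j.factorial : ℂ) ≠ 0 := Nat.cast_ne_zero.mpr j.factorial_ne_zero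
    have h5 : (m.choose n : ℂ) ≠ 0 := Nat.cast_ne_zero.mpr (by
      exact Nat.choose_pos (show n ≤ m by omega) |>.ne')
    rw [hpc, hfac]
    field_simp
    linear_combination hnum
  rw [Finset.sum_congr rfl hterm, ← Finset.sum_div, key_identity]

lemma mem_slitPlane_of_ball {w : ℂ} (hw : ‖w‖ < 1) : (1 + w) ∈ Complex.slitPlane := by
  rw [Complex.mem_slitPlane_iff]
  left
  have : |w.re| ≤ ‖w‖ := Complex.abs_re_le_norm w
  simp only [Complex.add_re, Complex.one_re]
  have := abs_le.mp this
  linarith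

lemma one_add_ne_zero_of_ball {w : ℂ} (hw : ‖w‖ < 1) : (1 + w) ≠ 0 :=
  Complex.slitPlane_ne_zero (mem_slitPlane_of_ball hw)

lemma iteratedDeriv_cpow (s : ℂ) (n : ℕ) :
    ∀ w ∈ Metric.ball (0:ℂ) 1,
      iteratedDeriv n (fun w : ℂ => (1 + w) ^ (-s)) w
        = (-1)^n * poch s n * (1 + w) ^ (-s - n) := by
  induction n with
  | zero => intro w _; simp [poch_zero]
  | succ n ih =>
    intro w hw
    rw [iteratedDeriv_succ]
    have hball : Metric.ball (0:ℂ) 1 ∈ nhds w := (Metric.isOpen_ball).mem_nhds hw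
    have hev : iteratedDeriv n (fun w : ℂ => (1 + w) ^ (-s))
        =ᶠ[nhds w] (fun w => (-1)^n * poch s n * (1 + w) ^ (-s - n)) :=
      Filter.eventuallyEq_of_mem hball ih
    rw [hev.deriv_eq]
    have hw' : ‖w‖ < 1 := by simpa [Metric.mem_ball] using hw
    have hd : HasDerivAt (fun w : ℂ => (1 + w) ^ (-s - n))
        ((-s - n) * (1 + w) ^ (-s - n - 1) * 1) w := by
      exact HasDerivAt.cpow_const ((hasDerivAt_id w).const_add 1) (mem_slitPlane_of_ball hw')
    have := (hd.const_mul ((-1:ℂ)^n * poch s n)).deriv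
    rw [this]
    rw [poch_succ]
    rw [show (-s - n - 1 : ℂ) = -s - (n+1 : ℕ) by push_cast; ring]
    push_cast
    ring

lemma hasSum_binomial (s : ℂ) {z : ℂ} (hz : ‖z‖ < 1) :
    HasSum (fun k => poch s k / (k.factorial : ℂ) * (-z) ^ k) ((1 + z) ^ (-s)) := by
  have hdiff : DifferentiableOn ℂ (fun w : ℂ => (1 + w) ^ (-s)) (Metric.ball 0 1) := by
    intro w hw
    have hw' : ‖w‖ < 1 := by simpa [Metric.mem_ball] using hw
    exact (DifferentiableAt.cpow (by fun_prop) (differentiableAt_const _)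
      (mem_slitPlane_of_ball hw')).differentiableWithinAt
  have hzball : z ∈ Metric.ball (0:ℂ) 1 := by simpa [Metric.mem_ball] using hz
  have H := Complex.hasSum_taylorSeries_on_ball hdiff hzball
  have h0 : (0:ℂ) ∈ Metric.ball (0:ℂ) 1 := by simp
  convert H using 2 with k
  · rfl
  rw [iteratedDeriv_cpow s k 0 h0]
  simp only [smul_eq_mul, sub_zero, add_zero, Complex.one_cpow]
  rw [neg_pow]
  ring

lemma tendsto_inv_shift (w : ℂ) : Filter.Tendsto (fun n : ℕ => (w + n)⁻¹) Filter.atTop (nhds 0) := by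
  rw [tendsto_zero_iff_norm_tendsto_zero]
  have hg : Filter.Tendsto (fun n : ℕ => ((n:ℝ) - ‖w‖)⁻¹) Filter.atTop (nhds 0) := by
    apply Filter.Tendsto.inv_tendsto_atTop
    exact Filter.tendsto_atTop_add_const_right _ _ tendsto_natCast_atTop_atTop
  apply squeeze_zero' (by filter_upwards with n using norm_nonneg _) _ hg
  filter_upwards [Filter.eventually_ge_atTop (⌈‖w‖⌉₊ + 1)] with n hn
  have hn' : ‖w‖ + 1 ≤ (n:ℝ) := by
    have h0 : ‖w‖ ≤ (⌈‖w‖⌉₊ : ℝ) := Nat.le_ceil _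
    have hcast : ((⌈‖w‖⌉₊ + 1 : ℕ) : ℝ) ≤ (n:ℝ) := by exact_mod_cast hn
    push_cast at hcast
    linarith
  have hpos : 0 < (n:ℝ) - ‖w‖ := by linarith
  have hlow : (n:ℝ) - ‖w‖ ≤ ‖w + n‖ := by
    have h := norm_sub_norm_le ((n:ℂ)) (-w)
    have h2 : (n:ℂ) - -w = w + n := by ring
    rw [h2] at h
    simpa using h
  rw [norm_inv]
  exact inv_anti₀ hpos hlow

lemma tendsto_ratio (x y w z : ℂ) :
    Filter.Tendsto (fun n : ℕ => ‖((x + n) * (y + n) * z) / ((w + n) * ((n:ℂ) + 1))‖)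
      Filter.atTop (nhds ‖z‖) := by
  have hinv1 : Filter.Tendsto (fun n : ℕ => ((n:ℂ) + 1)⁻¹) Filter.atTop (nhds 0) := by
    have := tendsto_inv_shift 1
    simpa [add_comm] using this
  have h1 : Filter.Tendsto (fun n : ℕ => (x + n)/((n:ℂ) + 1)) Filter.atTop (nhds 1) := by
    have he : ∀ n : ℕ, (x + n)/((n:ℂ) + 1) = (x - 1) * ((n:ℂ) + 1)⁻¹ + 1 := by
      intro n
      have hne : ((n:ℂ) + 1) ≠ 0 := by
        have h : ((n+1 : ℕ) : ℂ) ≠ 0 := Nat.cast_ne_zero.mpr (Nat.succ_ne_zero n)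
        push_cast at h
        exact h
      field_simp
      ring
    simp only [he]
    have := (hinv1.const_mul (x - 1)).add_const 1
    simpa using this
  have h2 : Filter.Tendsto (fun n : ℕ => (y + n)/(w + n)) Filter.atTop (nhds 1) := by
    have key : Filter.Tendsto (fun n : ℕ => 1 + (y - w) * (w + n)⁻¹) Filter.atTop (nhds 1) := by
      have := ((tendsto_inv_shift w).const_mul (y - w)).const_add 1
      simpa using this
    apply key.congr'
    filter_upwards [Filter.eventually_ge_atTop (⌈‖w‖⌉₊ + 1)] with n hn
    have hne : (w + n) ≠ 0 := by
      intro h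
      have hwn : ‖w‖ = (n:ℝ) := by
        have : w = -(n:ℂ) := by linear_combination h
        rw [this]; simp
      have hcast : ((⌈‖w‖⌉₊ + 1 : ℕ) : ℝ) ≤ (n:ℝ) := by exact_mod_cast hn
      push_cast at hcast
      have := Nat.le_ceil ‖w‖
      linarith
    field_simp
    ring
  have h3 : Filter.Tendsto (fun n : ℕ => ((x + n) * (y + n) * z) / ((w + n) * ((n:ℂ) + 1)))
      Filter.atTop (nhds z) := by
    have he : ∀ n : ℕ, ((x + n) * (y + n) * z) / ((w + n) * ((n:ℂ) + 1))
        = ((x + n)/((n:ℂ) + 1)) * ((y + n)/(w + n)) * z := by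
      intro n
      simp only [div_eq_mul_inv, mul_inv]
      ring
    simp only [he]
    have := (h1.mul h2).mul_const z
    simpa using this
  have := h3.norm
  simpa using this

noncomputable def hypTerm (x y w z : ℂ) (n : ℕ) : ℂ :=
  poch x n * poch y n / (poch w n * (n.factorial : ℂ)) * z ^ n

lemma hypTerm_succ (x y w z : ℂ) (n : ℕ) :
    hypTerm x y w z (n + 1) = hypTerm x y w z n *
      (((x + n) * (y + n) * z) / ((w + n) * ((n:ℂ) + 1))) := by
  unfold hypTerm
  rw [poch_succ, poch_succ, poch_succ, Nat.factorial_succ]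
  push_cast
  simp only [div_eq_mul_inv, mul_inv]
  ring

lemma summable_norm_hypTerm (x y w : ℂ) {z : ℂ} (hz : ‖z‖ < 1) :
    Summable (fun n => ‖hypTerm x y w z n‖) := by
  set r : ℝ := (1 + ‖z‖)/2 with hr
  have hr1 : r < 1 := by rw [hr]; linarith
  have hzr : ‖z‖ < r := by rw [hr]; linarith
  apply summable_of_ratio_norm_eventually_le hr1
  have htend := tendsto_ratio x y w z
  have hev : ∀ᶠ n : ℕ in Filter.atTop,
      ‖((x + n) * (y + n) * z) / ((w + n) * ((n:ℂ) + 1))‖ < r :=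
    htend.eventually_lt_const hzr
  filter_upwards [hev] with n hn
  rw [Real.norm_eq_abs, Real.norm_eq_abs, abs_of_nonneg (norm_nonneg _),
    abs_of_nonneg (norm_nonneg _), hypTerm_succ, norm_mul]
  have := mul_le_mul_of_nonneg_left hn.le (norm_nonneg (hypTerm x y w z n))
  calc ‖hypTerm x y w z n‖ * ‖((x + n) * (y + n) * z) / ((w + n) * ((n:ℂ) + 1))‖
      ≤ ‖hypTerm x y w z n‖ * r := this
    _ = r * ‖hypTerm x y w z n‖ := by ring

lemma summable_hypTerm (x y w : ℂ) {z : ℂ} (hz : ‖z‖ < 1) :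
    Summable (fun n => hypTerm x y w z n) :=
  (summable_norm_hypTerm x y w hz).of_norm

noncomputable def pochR (v : ℝ) (n : ℕ) : ℝ := (ascPochhammer ℝ n).eval v

lemma pochR_succ (v : ℝ) (n : ℕ) : pochR v (n + 1) = pochR v n * (v + n) := by
  simp [pochR, ascPochhammer_succ_right]

lemma pochR_nonneg {v : ℝ} (hv : 0 ≤ v) (n : ℕ) : 0 ≤ pochR v n := by
  induction n with
  | zero => simp [pochR]
  | succ n ih =>
    rw [pochR_succ]
    exact mul_nonneg ih (by positivity)

lemma norm_poch_le {u : ℂ} {v : ℝ} (hv : ‖u‖ ≤ v) (k : ℕ) : ‖poch u k‖ ≤ pochR v k := by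
  have hv0 : 0 ≤ v := le_trans (norm_nonneg u) hv
  induction k with
  | zero => simp [poch_zero, pochR]
  | succ k ih =>
    rw [poch_succ, pochR_succ, norm_mul]
    apply mul_le_mul ih ?_ (norm_nonneg _) (pochR_nonneg hv0 k)
    calc ‖u + (k:ℂ)‖ ≤ ‖u‖ + ‖(k:ℂ)‖ := norm_add_le _ _
      _ ≤ v + k := by
          have : ‖(k:ℂ)‖ = (k:ℝ) := by simp
          rw [this]; linarith

lemma poch_ofReal (v : ℝ) (k : ℕ) : poch (v:ℂ) k = ((pochR v k : ℝ) : ℂ) := by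
  unfold poch pochR
  rw [← ascPochhammer_map (Complex.ofRealHom) k, Polynomial.eval_map,
    show ((v:ℂ)) = Complex.ofRealHom v from rfl, Polynomial.eval₂_at_apply]
  rfl

lemma hasSum_binomial_real {t : ℝ} (ht0 : 0 ≤ t) (ht1 : t < 1) (v : ℝ) :
    HasSum (fun k => pochR v k / (k.factorial : ℝ) * t ^ k) ((1 - t) ^ (-v)) := by
  have hz : ‖(-t : ℂ)‖ < 1 := by
    rw [norm_neg]
    simpa [Complex.norm_real, abs_of_nonneg ht0] using ht1
  have H := hasSum_binomial (v:ℂ) hz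
  have hval : ((1:ℂ) + (-t:ℂ)) ^ (-(v:ℂ)) = (((1 - t) ^ (-v) : ℝ) : ℂ) := by
    rw [Complex.ofReal_cpow (by linarith) (-v)]
    push_cast
    ring_nf
  rw [hval] at H
  have hterm : ∀ k : ℕ, poch (v:ℂ) k / (k.factorial : ℂ) * (-(-t:ℂ)) ^ k
      = (((pochR v k / (k.factorial : ℝ) * t ^ k : ℝ)) : ℂ) := by
    intro k
    rw [poch_ofReal, neg_neg]
    push_cast
    ring
  simp only [hterm] at H
  exact Complex.hasSum_ofReal.mp H

lemma tsum_prod_antidiagonal {f : ℕ × ℕ → ℂ} (hf : Summable f) :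
    ∑' p : ℕ × ℕ, f p = ∑' m : ℕ, ∑ ij ∈ Finset.HasAntidiagonal.antidiagonal m, f ij := by
  conv_rhs => congr; ext m; rw [← Finset.sum_finset_coe, ← tsum_fintype (L := .unconditional _)]
  rw [← Finset.HasAntidiagonal.sigmaAntidiagonalEquivProd.tsum_eq f]
  exact Summable.tsum_sigma' (fun m => (hasSum_fintype _).summable)
    (Finset.HasAntidiagonal.sigmaAntidiagonalEquivProd.summable_iff.mpr hf)

lemma hyp2F1_eq (a b c z : ℂ) : hyp2F1 a b c z = ∑' n, hypTerm a b c z n := rfl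

theorem small_z (a b : ℂ) (hc : ∀ n : ℕ, a - b + 1 ≠ -(n : ℂ)) {z : ℂ} (hz : ‖z‖ < 1)
    (hsmall : 4 * ‖z‖ < (1 - ‖z‖)^2) :
    hyp2F1 a b (a - b + 1) z =
      (1 + z) ^ (-a) * hyp2F1 (a/2) ((a+1)/2) (a - b + 1) (4 * z / (1 + z)^2) := by
  set c : ℂ := a - b + 1 with hcdef
  set t : ℝ := ‖z‖ with htdef
  have ht0 : 0 ≤ t := norm_nonneg z
  have ht1 : t < 1 := hz
  have h1t : 0 < 1 - t := by linarith
  set u : ℝ := 4 * t / (1 - t)^2 with hudef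
  have hu0 : 0 ≤ u := by positivity
  have hu1 : u < 1 := by
    rw [hudef, div_lt_one (by positivity)]
    exact hsmall
  have h1z : (1 + z) ≠ 0 := one_add_ne_zero_of_ball hz
  set w : ℂ := 4 * z / (1 + z)^2 with hwdef
  have hnorm1z : 1 - t ≤ ‖1 + z‖ := by
    have h := norm_sub_norm_le (1 : ℂ) (-z)
    have h2 : (1:ℂ) - -z = 1 + z := by ring
    rw [h2] at h
    simpa using h
  have hw_le : ‖w‖ ≤ u := by
    rw [hwdef, hudef, norm_div, norm_mul]
    have h4 : ‖(4:ℂ)‖ = 4 := by norm_num [Complex.norm_natCast]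
    rw [norm_pow, h4]
    apply div_le_div₀ (by positivity) (by rw [htdef]) (by positivity)
    exact pow_le_pow_left₀ h1t.le hnorm1z 2
  have hw1 : ‖w‖ < 1 := lt_of_le_of_lt hw_le hu1
  -- the double-indexed family
  set Q : ℕ → ℂ := fun n => poch (a/2) n * poch ((a+1)/2) n / (poch c n * (n.factorial : ℂ))
    with hQdef
  set T : ℕ × ℕ → ℂ := fun p =>
    Q p.1 * 4 ^ p.1 * (poch (a + 2*p.1) p.2 * (-1) ^ p.2 / (p.2.factorial : ℂ)) * z ^ (p.1 + p.2)
    with hTdef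
  set S : ℕ × ℕ → ℝ := fun p =>
    ‖Q p.1‖ * 4 ^ p.1 * (pochR (‖a‖ + 2*p.1) p.2 / (p.2.factorial : ℝ)) * t ^ (p.1 + p.2)
    with hSdef
  have hS_nonneg : ∀ p, 0 ≤ S p := by
    intro p
    apply mul_nonneg (mul_nonneg (mul_nonneg (norm_nonneg _) (by positivity)) _) (by positivity)
    exact div_nonneg (pochR_nonneg (by positivity) _) (by positivity)
  have hTS : ∀ p, ‖T p‖ ≤ S p := by
    intro ⟨n, k⟩
    rw [hTdef, hSdef]
    simp only [norm_mul, norm_div, norm_pow]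
    have h4 : ‖(4:ℂ)‖ = 4 := by norm_num [Complex.norm_natCast]
    rw [h4]
    have hfac : ‖((k.factorial : ℂ))‖ = (k.factorial : ℝ) := by
      simp [Complex.norm_natCast]
    have hsign : ‖(-1 : ℂ)‖ = 1 := by simp
    rw [hfac, hsign, one_pow]
    have hkey : ‖poch (a + 2*(n:ℂ)) k‖ ≤ pochR (‖a‖ + 2*n) k := by
      apply norm_poch_le
      calc ‖a + 2*(n:ℂ)‖ ≤ ‖a‖ + ‖2*(n:ℂ)‖ := norm_add_le _ _
        _ ≤ ‖a‖ + 2*n := by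
            rw [norm_mul]
            simp [Complex.norm_natCast]
    have hfacpos : (0:ℝ) < (k.factorial : ℝ) := by positivity
    apply mul_le_mul_of_nonneg_right _ (by positivity : (0:ℝ) ≤ t^(n+k))
    apply mul_le_mul_of_nonneg_left _ (by positivity : (0:ℝ) ≤ ‖Q n‖ * 4^n)
    rw [mul_one]
    exact (div_le_div_iff_of_pos_right hfacpos).mpr hkey
  -- row sums of S
  have hrow : ∀ n : ℕ, HasSum (fun k => S (n, k))
      (‖Q n‖ * 4^n * t^n * (1 - t) ^ (-(‖a‖ + 2*n))) := by
    intro n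
    have H := (hasSum_binomial_real ht0 ht1 (‖a‖ + 2*n)).mul_left (‖Q n‖ * 4^n * t^n)
    convert H using 2 with k
    · rfl
    rw [hSdef]
    simp only
    rw [pow_add]
    ring
  set B : ℕ → ℝ := fun n => ‖Q n‖ * 4^n * t^n * (1 - t) ^ (-(‖a‖ + 2*n)) with hBdef
  have hB_eq : ∀ n, B n = (1-t)^(-‖a‖) * ‖hypTerm (a/2) ((a+1)/2) c (u:ℂ) n‖ := by
    intro n
    have h1 : (1-t) ^ (-(‖a‖ + 2*(n:ℝ))) = (1-t)^(-‖a‖) * ((1-t)^(2*n : ℕ))⁻¹ := by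
      rw [show (-(‖a‖ + 2*(n:ℝ))) = -‖a‖ + (-((2*n : ℕ):ℝ)) by push_cast; ring,
        Real.rpow_add h1t]
      congr 1
      rw [Real.rpow_neg h1t.le, Real.rpow_natCast]
    have h2 : ‖hypTerm (a/2) ((a+1)/2) c (u:ℂ) n‖ = ‖Q n‖ * u^n := by
      unfold hypTerm
      rw [hQdef]
      simp only [norm_mul, norm_pow]
      rw [Complex.norm_real, Real.norm_eq_abs, abs_of_nonneg hu0]
    simp only [hBdef]
    rw [h1, h2]
    rw [hudef, div_pow, mul_pow]
    rw [show ((1-t)^2)^n = (1-t)^(2*n) by rw [← pow_mul]]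
    field_simp
  have hBsum : Summable B := by
    have hs : Summable (fun n => ‖hypTerm (a/2) ((a+1)/2) c (u:ℂ) n‖) := by
      apply summable_norm_hypTerm
      rw [Complex.norm_real, Real.norm_eq_abs, abs_of_nonneg hu0]
      exact hu1
    exact (funext hB_eq : B = _) ▸ hs.mul_left _
  have hSsum : Summable S := by
    rw [summable_prod_of_nonneg hS_nonneg]
    refine ⟨fun n => (hrow n).summable, ?_⟩
    apply Summable.congr hBsum
    intro n
    exact ((hrow n).tsum_eq).symm
  have hTnorm : Summable (fun p => ‖T p‖) :=
    Summable.of_nonneg_of_le (fun p => norm_nonneg _) hTS hSsum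
  have hT : Summable T := hTnorm.of_norm
  -- diagonal grouping
  have hdiag : ∑' p : ℕ × ℕ, T p = hyp2F1 a b c z := by
    rw [tsum_prod_antidiagonal hT, hyp2F1_eq]
    congr 1
    funext m
    have hterm : ∀ ij ∈ Finset.HasAntidiagonal.antidiagonal m, T ij =
        ((poch (a/2) ij.1 * poch ((a+1)/2) ij.1 / (poch c ij.1 * (ij.1.factorial : ℂ))) *
          4 ^ ij.1 * (poch (a + 2*ij.1) ij.2 * (-1) ^ ij.2 / (ij.2.factorial : ℂ))) * z ^ m := by
      intro ij hij
      rw [Finset.HasAntidiagonal.mem_antidiagonal] at hij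
      rw [hTdef, hQdef]
      simp only
      rw [hij]
    rw [Finset.sum_congr rfl hterm, ← Finset.sum_mul, coeff_identity a b hc m]
    unfold hypTerm
    rfl
  -- row grouping
  have hrows : ∑' p : ℕ × ℕ, T p = (1+z)^(-a) * hyp2F1 (a/2) ((a+1)/2) c w := by
    rw [Summable.tsum_prod hT]
    have hinner : ∀ n : ℕ, ∑' k, T (n, k) = (1+z)^(-a) * hypTerm (a/2) ((a+1)/2) c w n := by
      intro n
      have Hb := (hasSum_binomial (a + 2*(n:ℂ)) hz).mul_left (Q n * 4^n * z^n)
      have he : (fun k => T (n, k)) =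
          (fun k => (Q n * 4^n * z^n) * (poch (a + 2*(n:ℂ)) k / (k.factorial : ℂ) * (-z)^k)) := by
        funext k
        rw [hTdef]
        simp only
        rw [neg_pow, pow_add]
        ring
      rw [he, Hb.tsum_eq]
      have hcpow : (1+z) ^ (-(a + 2*(n:ℂ))) = (1+z)^(-a) * ((1+z)^(2*n : ℕ))⁻¹ := by
        rw [show (-(a + 2*(n:ℂ))) = -a + -((2*n : ℕ):ℂ) by push_cast; ring,
          Complex.cpow_add _ _ h1z]
        congr 1
        rw [Complex.cpow_neg, Complex.cpow_natCast]
      have hwn : w^n = 4^n * z^n * ((1+z)^(2*n : ℕ))⁻¹ := by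
        rw [hwdef, div_pow, mul_pow, show ((1+z)^2)^n = (1+z)^(2*n) by rw [← pow_mul],
          div_eq_mul_inv]
      rw [hcpow]
      unfold hypTerm
      rw [show poch (a/2) n * poch ((a+1)/2) n / (poch c n * (n.factorial : ℂ)) * w^n
          = Q n * w^n from rfl, hwn]
      ring
    rw [tsum_congr hinner, tsum_mul_left, hyp2F1_eq]
  rw [← hdiag, hrows]

lemma differentiableOn_hyp2F1 (x y w : ℂ) :
    DifferentiableOn ℂ (fun z => hyp2F1 x y w z) (Metric.ball (0:ℂ) 1) := by
  set q : ℕ → ℂ := fun n => poch x n * poch y n / (poch w n * (n.factorial : ℂ)) with hq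
  set p : FormalMultilinearSeries ℂ ℂ ℂ :=
    fun n => ContinuousMultilinearMap.mkPiRing ℂ (Fin n) (q n) with hp
  have hrad : 1 ≤ p.radius := by
    apply ENNReal.le_of_forall_nnreal_lt
    intro r hr
    apply p.le_radius_of_summable_norm
    have hr1 : ‖((r:ℝ):ℂ)‖ < 1 := by
      rw [Complex.norm_real, Real.norm_eq_abs, abs_of_nonneg r.coe_nonneg]
      exact_mod_cast hr
    have := summable_norm_hypTerm x y w hr1
    apply Summable.congr this
    intro n
    rw [hp]
    simp only [ContinuousMultilinearMap.norm_mkPiRing]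
    unfold hypTerm
    rw [norm_mul, norm_pow, Complex.norm_real, Real.norm_eq_abs, abs_of_nonneg r.coe_nonneg]
  have hball : HasFPowerSeriesOnBall (fun z => hyp2F1 x y w z) p 0 1 := by
    refine ⟨hrad, one_pos, ?_⟩
    intro v hv
    rw [EMetric.mem_ball, edist_zero_right] at hv
    have hv1 : ‖v‖ < 1 := by rw [enorm_eq_nnnorm] at hv; exact_mod_cast hv
    have hs := (summable_hypTerm x y w hv1).hasSum
    rw [hyp2F1_eq, zero_add]
    have he : (fun n => (p n) fun _ => v) = fun n => hypTerm x y w v n := by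
      funext n
      rw [hp]
      simp only [ContinuousMultilinearMap.mkPiRing_apply, Finset.prod_const, Finset.card_univ,
        Fintype.card_fin, smul_eq_mul]
      unfold hypTerm
      ring
    rw [he]
    exact hs
  have := hball.differentiableOn
  apply this.mono
  intro v hv
  rw [EMetric.mem_ball, edist_zero_right]
  rw [Metric.mem_ball, dist_zero_right] at hv
  rw [enorm_eq_nnnorm]
  exact_mod_cast hv

lemma star_ineq {t x s : ℝ} (hs0 : 0 ≤ s) (hs1 : s ≤ 1) (hx : x ≤ t) (ht0 : 0 ≤ t)
    (ht1 : t < 1) (h : 4 * t < 1 + 2 * x + t^2) : 4 * (s * t) < 1 + 2 * (s * x) + s^2 * t^2 := by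
  nlinarith [mul_nonneg (sub_nonneg.mpr hs1) (by nlinarith : (0:ℝ) ≤ 4*t - 2*x - t^2*(s+1)),
    sq_nonneg t, mul_nonneg ht0 (sub_nonneg.mpr ht1.le)]

lemma norm_one_add_sq (v : ℂ) : ‖1 + v‖^2 = 1 + 2 * v.re + ‖v‖^2 := by
  rw [Complex.sq_norm, Complex.sq_norm,
    Complex.normSq_apply, Complex.normSq_apply]
  simp only [Complex.add_re, Complex.add_im, Complex.one_re, Complex.one_im]
  ring

lemma cond_iff {v : ℂ} (hv : ‖v‖ < 1) :
    ‖4 * v / (1 + v)^2‖ < 1 ↔ 4 * ‖v‖ < ‖1 + v‖^2 := by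
  have h1z : (1 + v) ≠ 0 := one_add_ne_zero_of_ball hv
  have hpos : 0 < ‖1 + v‖^2 := pow_pos (norm_pos_iff.mpr h1z) 2
  rw [norm_div, norm_mul, norm_pow, div_lt_one hpos]
  norm_num [Complex.norm_natCast]

lemma mem_U_smul {v : ℂ} (hv1 : ‖v‖ < 1) (hv2 : ‖4 * v / (1 + v)^2‖ < 1)
    {s : ℝ} (hs0 : 0 ≤ s) (hs1 : s ≤ 1) :
    ‖(s:ℂ) * v‖ < 1 ∧ ‖4 * ((s:ℂ) * v) / (1 + (s:ℂ) * v)^2‖ < 1 := by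
  have hnorm : ‖(s:ℂ) * v‖ = s * ‖v‖ := by
    rw [norm_mul, Complex.norm_real, Real.norm_eq_abs, abs_of_nonneg hs0]
  have hsv1 : ‖(s:ℂ) * v‖ < 1 := by
    rw [hnorm]
    calc s * ‖v‖ ≤ 1 * ‖v‖ := by
          apply mul_le_mul_of_nonneg_right hs1 (norm_nonneg v)
      _ = ‖v‖ := by ring
      _ < 1 := hv1
  refine ⟨hsv1, ?_⟩
  rw [cond_iff hsv1, norm_one_add_sq, hnorm]
  have hre : ((s:ℂ) * v).re = s * v.re := by
    simp [Complex.mul_re]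
  rw [hre]
  have h2 := (cond_iff hv1).mp hv2
  rw [norm_one_add_sq] at h2
  have hxle : v.re ≤ ‖v‖ := Complex.re_le_norm v
  have := star_ineq hs0 hs1 hxle (norm_nonneg v) hv1 h2
  calc 4 * (s * ‖v‖) < 1 + 2 * (s * v.re) + s^2 * ‖v‖^2 := this
    _ = 1 + 2 * (s * v.re) + (s * ‖v‖)^2 := by ring

theorem hyp2F1_quadratic_transformation (a b z : ℂ)
    (hc : ∀ n : ℕ, a - b + 1 ≠ -(n : ℂ))
    (hz : ‖z‖ < 1) (hz2 : ‖4 * z / (1 + z) ^ 2‖ < 1) :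
    hyp2F1 a b (a - b + 1) z =
      (1 + z) ^ (-a) * hyp2F1 (a / 2) ((a + 1) / 2) (a - b + 1) (4 * z / (1 + z) ^ 2) := by
  set c : ℂ := a - b + 1 with hcdef
  set U : Set ℂ := {v : ℂ | ‖v‖ < 1 ∧ ‖4 * v / (1 + v)^2‖ < 1} with hUdef
  set F : ℂ → ℂ := fun v => hyp2F1 a b c v with hFdef
  set G : ℂ → ℂ := fun v => (1 + v) ^ (-a) *
    hyp2F1 (a/2) ((a+1)/2) c (4 * v / (1 + v)^2) with hGdef
  set wmap : ℂ → ℂ := fun v => 4 * v / (1 + v)^2 with hwmap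
  -- U is open
  have hUeq : U = Metric.ball (0:ℂ) 1 ∩ wmap ⁻¹' (Metric.ball (0:ℂ) 1) := by
    ext v
    simp [hUdef, Metric.mem_ball, dist_zero_right, hwmap]
  have hwcont : ContinuousOn wmap (Metric.ball (0:ℂ) 1) := by
    apply ContinuousOn.div
    · fun_prop
    · fun_prop
    · intro v hv
      rw [Metric.mem_ball, dist_zero_right] at hv
      exact pow_ne_zero 2 (one_add_ne_zero_of_ball hv)
  have hUopen : IsOpen U := by
    rw [hUeq]
    exact hwcont.isOpen_inter_preimage Metric.isOpen_ball Metric.isOpen_ball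
  -- U is preconnected
  have hUpre : IsPreconnected U := by
    apply isPreconnected_of_forall (0:ℂ)
    intro v hv
    refine ⟨segment ℝ 0 v, ?_, left_mem_segment ℝ 0 v, right_mem_segment ℝ 0 v,
      (convex_segment 0 v).isPreconnected⟩
    intro p hp
    rw [segment_eq_image] at hp
    obtain ⟨s, hs, hps⟩ := hp
    have hps' : p = (s:ℂ) * v := by
      rw [← hps]
      simp [Complex.real_smul]
    obtain ⟨hv1, hv2⟩ := hv
    have := mem_U_smul hv1 hv2 hs.1 hs.2
    rw [hps']
    exact this
  -- F analytic on U
  have hUsub : U ⊆ Metric.ball (0:ℂ) 1 := by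
    intro v hv
    rw [Metric.mem_ball, dist_zero_right]
    exact hv.1
  have hF : AnalyticOnNhd ℂ F U :=
    ((differentiableOn_hyp2F1 a b c).mono hUsub).analyticOnNhd hUopen
  -- G analytic on U
  have hG : AnalyticOnNhd ℂ G U := by
    apply DifferentiableOn.analyticOnNhd _ hUopen
    intro v hv
    apply DifferentiableAt.differentiableWithinAt
    have hv1 : ‖v‖ < 1 := hv.1
    have h1z : (1 + v) ≠ 0 := one_add_ne_zero_of_ball hv1
    have hd1 : DifferentiableAt ℂ (fun v : ℂ => (1 + v) ^ (-a)) v :=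
      DifferentiableAt.cpow (by fun_prop) (differentiableAt_const _) (mem_slitPlane_of_ball hv1)
    have hdw : DifferentiableAt ℂ wmap v := by
      apply DifferentiableAt.div (by fun_prop) (by fun_prop)
      exact pow_ne_zero 2 h1z
    have hwv : wmap v ∈ Metric.ball (0:ℂ) 1 := by
      rw [Metric.mem_ball, dist_zero_right]
      exact hv.2
    have hd2 : DifferentiableAt ℂ (fun u => hyp2F1 (a/2) ((a+1)/2) c u) (wmap v) :=
      ((differentiableOn_hyp2F1 (a/2) ((a+1)/2) c).differentiableAt
        (Metric.isOpen_ball.mem_nhds hwv))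
    exact hd1.mul (hd2.comp v hdw)
  -- agreement near 0
  have h0U : (0:ℂ) ∈ U := by
    constructor <;> simp [hwmap]
  have hEq : F =ᶠ[nhds 0] G := by
    have hball : Metric.ball (0:ℂ) (1/8) ∈ nhds (0:ℂ) :=
      Metric.ball_mem_nhds 0 (by norm_num)
    filter_upwards [hball] with v hv
    rw [Metric.mem_ball, dist_zero_right] at hv
    have hv1 : ‖v‖ < 1 := lt_trans hv (by norm_num)
    have hsmall : 4 * ‖v‖ < (1 - ‖v‖)^2 := by
      nlinarith [norm_nonneg v]
    exact small_z a b hc hv1 hsmall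
  have := hF.eqOn_of_preconnected_of_eventuallyEq hG hUpre h0U hEq
  exact this ⟨hz, hz2⟩
end

section
/- As x → ∞ with α > β > 0 and ν > 0 fixed, f(x) := (x+α)^{−1/2}(x+β)^{−1/2} ((√(x+α)−√(x+β))/(√(x+α)+√(x+β)))^ν ((x+α)^{−1/2}+(x+β)^{−1/2})^{k−2} ₂F₁(ν+1−k/2, 1−k/2; ν+1; ((√(x+α)−√(x+β))/(√(x+α)+√(x+β)))²) satisfies f(x) ~ 2^{k−2−2ν}(α−β)^ν / x^{ν+k/2}; more precisely f(x) = 2^{k−2−2ν}(α−β)^ν x^{−ν−k/2} + O(x^{−ν−k/2−1}). -/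
set_option maxHeartbeats 1600000

open scoped Real

open Filter Asymptotics

section Aux

open Topology

lemma poch_eval_prod (x : ℂ) (n : ℕ) :
    (ascPochhammer ℂ n).eval x = ∏ i ∈ Finset.range n, (x + i) := by
  induction n with
  | zero => simp
  | succ n ih => rw [ascPochhammer_succ_eval, ih, Finset.prod_range_succ]

lemma poch_norm_le (x : ℂ) (n : ℕ) :
    ‖(ascPochhammer ℂ n).eval x‖ ≤ (‖x‖ + 1) ^ n * n.factorial := by
  rw [poch_eval_prod]
  calc ‖∏ i ∈ Finset.range n, (x + i)‖ = ∏ i ∈ Finset.range n, ‖x + (i:ℂ)‖ := by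
        rw [norm_prod]
    _ ≤ ∏ i ∈ Finset.range n, ((‖x‖ + 1) * (i + 1)) := by
        apply Finset.prod_le_prod
        · intro i _; positivity
        · intro i _
          calc ‖x + (i:ℂ)‖ ≤ ‖x‖ + i := by
                simpa using norm_add_le x (i:ℂ)
            _ ≤ (‖x‖ + 1) * (i + 1) := by nlinarith [norm_nonneg x, Nat.cast_nonneg (α := ℝ) i]
    _ = (‖x‖ + 1) ^ n * n.factorial := by
        rw [Finset.prod_mul_distrib, Finset.prod_const, Finset.card_range]
        congr 1
        induction n with
        | zero => simp
        | succ n ih => rw [Finset.prod_range_succ, ih, Nat.factorial_succ]; push_cast; ring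

lemma poch_norm_ge (c : ℝ) (hc : 1 ≤ c) (n : ℕ) :
    (n.factorial : ℝ) ≤ ‖(ascPochhammer ℂ n).eval (c : ℂ)‖ := by
  rw [poch_eval_prod]
  have h : ∀ i : ℕ, ((c:ℂ) + i) = ((c + i : ℝ) : ℂ) := by intro i; push_cast; ring
  calc (n.factorial : ℝ) = ∏ i ∈ Finset.range n, ((1:ℝ) + i) := by
        induction n with
        | zero => simp
        | succ n ih => rw [Finset.prod_range_succ, ← ih, Nat.factorial_succ]; push_cast; ring
    _ ≤ ∏ i ∈ Finset.range n, ‖(c:ℂ) + i‖ := by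
        apply Finset.prod_le_prod
        · intro i _; positivity
        · intro i _
          rw [h i, Complex.norm_real]
          have h0 : (0:ℝ) ≤ c + i := by positivity
          rw [Real.norm_eq_abs, abs_of_nonneg h0]
          have := (Nat.cast_nonneg (α := ℝ) i); linarith
    _ = ‖∏ i ∈ Finset.range n, ((c:ℂ) + i)‖ := (norm_prod _ _).symm

lemma hyp_term_bound (a b : ℂ) (c : ℝ) (hc : 1 ≤ c) (z : ℂ) (n : ℕ) :
    ‖((ascPochhammer ℂ n).eval a * (ascPochhammer ℂ n).eval b) /
      ((ascPochhammer ℂ n).eval (c:ℂ) * (n.factorial : ℂ)) * z ^ n‖ ≤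
      ((‖a‖ + 1) * (‖b‖ + 1) * ‖z‖) ^ n := by
  have hfac : (0:ℝ) < n.factorial := by exact_mod_cast n.factorial_pos
  have hcn : (n.factorial : ℝ) ≤ ‖(ascPochhammer ℂ n).eval (c:ℂ)‖ := poch_norm_ge c hc n
  have hcn' : (0:ℝ) < ‖(ascPochhammer ℂ n).eval (c:ℂ)‖ := lt_of_lt_of_le hfac hcn
  rw [norm_mul, norm_div, norm_mul, norm_mul, norm_pow]
  have h1 := poch_norm_le a n
  have h2 := poch_norm_le b n
  have hden : (n.factorial : ℝ) * n.factorial ≤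
      ‖(ascPochhammer ℂ n).eval (c:ℂ)‖ * ‖(n.factorial : ℂ)‖ := by
    have h : ‖(n.factorial : ℂ)‖ = (n.factorial : ℝ) := by
      rw [show ((n.factorial : ℂ)) = ((n.factorial : ℝ) : ℂ) by push_cast; ring,
        Complex.norm_real, Real.norm_eq_abs, abs_of_pos hfac]
    rw [h]
    exact mul_le_mul_of_nonneg_right hcn hfac.le
  calc ‖(ascPochhammer ℂ n).eval a‖ * ‖(ascPochhammer ℂ n).eval b‖ /
        (‖(ascPochhammer ℂ n).eval (c:ℂ)‖ * ‖(n.factorial : ℂ)‖) * ‖z‖ ^ n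
      ≤ ((‖a‖ + 1) ^ n * n.factorial) * ((‖b‖ + 1) ^ n * n.factorial) /
        ((n.factorial : ℝ) * n.factorial) * ‖z‖ ^ n := by
        apply mul_le_mul_of_nonneg_right _ (by positivity)
        apply div_le_div₀ (by positivity) _ (by positivity) hden
        exact mul_le_mul h1 h2 (norm_nonneg _) (by positivity)
    _ = ((‖a‖ + 1) * (‖b‖ + 1) * ‖z‖) ^ n := by
        have h : ((‖a‖ + 1) ^ n * (n.factorial:ℝ)) * ((‖b‖ + 1) ^ n * n.factorial) /
            ((n.factorial:ℝ) * n.factorial) = (‖a‖+1)^n * (‖b‖+1)^n := by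
          field_simp
        rw [h, mul_pow, mul_pow]

lemma hyp_tail (a b : ℂ) (c : ℝ) (hc : 1 ≤ c) (z : ℂ)
    (hz : (‖a‖ + 1) * (‖b‖ + 1) * ‖z‖ ≤ 1/2) :
    ‖hyp2F1 a b (c:ℂ) z - 1‖ ≤ 2 * ((‖a‖ + 1) * (‖b‖ + 1)) * ‖z‖ := by
  set M := (‖a‖ + 1) * (‖b‖ + 1) with hM
  have hM1 : (1:ℝ) ≤ M := by nlinarith [norm_nonneg a, norm_nonneg b]
  set q := M * ‖z‖ with hq
  have hq0 : 0 ≤ q := by positivity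
  have hq2 : q ≤ 1/2 := hz
  have hq1 : q < 1 := by linarith
  set T : ℕ → ℂ := fun n => ((ascPochhammer ℂ n).eval a * (ascPochhammer ℂ n).eval b) /
    ((ascPochhammer ℂ n).eval (c:ℂ) * (n.factorial : ℂ)) * z ^ n with hT
  have hbound : ∀ n, ‖T n‖ ≤ q ^ n := fun n => hyp_term_bound a b c hc z n
  have hsum : Summable T :=
    Summable.of_norm_bounded (summable_geometric_of_lt_one hq0 hq1) hbound
  have h0 : T 0 = 1 := by simp [hT]
  have heq : hyp2F1 a b (c:ℂ) z = T 0 + ∑' n, T (n + 1) := by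
    rw [hyp2F1]
    exact hsum.tsum_eq_zero_add
  rw [heq, h0, add_sub_cancel_left]
  have hsum1 : Summable fun n => T (n + 1) := (summable_nat_add_iff 1).mpr hsum
  calc ‖∑' n, T (n + 1)‖ ≤ ∑' n, ‖T (n + 1)‖ := norm_tsum_le_tsum_norm hsum1.norm
    _ ≤ ∑' n : ℕ, q ^ (n + 1) := by
        apply Summable.tsum_le_tsum (fun n => hbound (n+1)) hsum1.norm
        exact ((summable_geometric_of_lt_one hq0 hq1).mul_left q).congr (fun n => by ring)
    _ = q * ∑' n : ℕ, q ^ n := by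
        rw [← tsum_mul_left]; congr 1; ext n; ring
    _ = q * (1 - q)⁻¹ := by rw [tsum_geometric_of_lt_one hq0 hq1]
    _ ≤ q * 2 := by
        apply mul_le_mul_of_nonneg_left _ hq0
        rw [inv_le_iff_one_le_mul₀ (by linarith)]
        linarith
    _ = 2 * M * ‖z‖ := by rw [hq]; ring

noncomputable def Faux (k : ℕ) (ν α β u : ℝ) : ℝ :=
  ((Real.sqrt (1 + α * u) + Real.sqrt (1 + β * u)) / 2) ^ ((k:ℝ) - 2 - 2 * ν) *
    ((1 + α * u) * (1 + β * u)) ^ ((1 - (k:ℝ)) / 2)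

lemma Faux_zero (k : ℕ) (ν α β : ℝ) : Faux k ν α β 0 = 1 := by
  norm_num [Faux]

lemma Faux_diff (k : ℕ) (ν α β : ℝ) : DifferentiableAt ℝ (Faux k ν α β) 0 := by
  have h1 : DifferentiableAt ℝ (fun u : ℝ => 1 + α * u) 0 := by fun_prop
  have h2 : DifferentiableAt ℝ (fun u : ℝ => 1 + β * u) 0 := by fun_prop
  have hs1 : DifferentiableAt ℝ (fun u : ℝ => Real.sqrt (1 + α * u)) 0 :=
    h1.sqrt (by norm_num)
  have hs2 : DifferentiableAt ℝ (fun u : ℝ => Real.sqrt (1 + β * u)) 0 :=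
    h2.sqrt (by norm_num)
  apply DifferentiableAt.mul
  · apply DifferentiableAt.rpow_const ((hs1.add hs2).div_const 2)
    left
    norm_num
  · apply DifferentiableAt.rpow_const (h1.mul h2)
    left
    norm_num

lemma Faux_slope (k : ℕ) (ν α β : ℝ) :
    ∃ d : ℝ, Tendsto (fun x : ℝ => (Faux k ν α β (1 / x) - 1) * x) atTop (𝓝 d) := by
  refine ⟨deriv (Faux k ν α β) 0, ?_⟩
  have hd := (Faux_diff k ν α β).hasDerivAt
  rw [hasDerivAt_iff_tendsto_slope] at hd
  have hinv : Tendsto (fun x : ℝ => 1 / x) atTop (𝓝[≠] (0:ℝ)) := by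
    apply tendsto_nhdsWithin_of_tendsto_nhds_of_eventually_within
    · simpa [one_div] using tendsto_inv_atTop_zero
    · filter_upwards [eventually_ge_atTop 1] with x hx
      have h : (0:ℝ) < 1 / x := by positivity
      have hx0 : x ≠ 0 := by positivity
      simp [h.ne', hx0]
  have hcomp := hd.comp hinv
  apply hcomp.congr'
  filter_upwards [eventually_ge_atTop 1] with x hx
  have hx0 : (0:ℝ) < x := lt_of_lt_of_le one_pos hx
  simp only [Function.comp_apply, slope_def_field, Faux_zero]
  rw [sub_zero]
  field_simp

lemma Faux_tendsto (k : ℕ) (ν α β : ℝ) :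
    Tendsto (fun x : ℝ => Faux k ν α β (1 / x)) atTop (𝓝 1) := by
  have h : Tendsto (Faux k ν α β) (𝓝 0) (𝓝 (1:ℝ)) := by
    have := (Faux_diff k ν α β).continuousAt.tendsto
    rwa [Faux_zero] at this
  have h2 : Tendsto (fun x : ℝ => 1 / x) atTop (𝓝 (0:ℝ)) := by
    simpa [one_div] using tendsto_inv_atTop_zero
  exact h.comp h2

lemma key_id (k : ℕ) (hk : 2 ≤ k) (ν α β : ℝ) (hν : 0 < ν)
    (hβ : 0 < β) (hαβ : β < α) (x : ℝ) (hx : 1 ≤ x) :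
    ((Real.sqrt (x + α) - Real.sqrt (x + β)) / (Real.sqrt (x + α) + Real.sqrt (x + β))) ^ ν /
        (Real.sqrt (x + α) * Real.sqrt (x + β)) *
        (1 / Real.sqrt (x + α) + 1 / Real.sqrt (x + β)) ^ (k - 2) =
      (2 : ℝ) ^ ((k : ℝ) - 2 - 2 * ν) * (α - β) ^ ν * x ^ (-(ν + (k : ℝ) / 2)) *
        Faux k ν α β (1 / x) := by
  have hx0 : (0:ℝ) < x := by linarith
  have hα0 : 0 < α := lt_trans hβ hαβ
  have hxα : (0:ℝ) < x + α := by linarith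
  have hxβ : (0:ℝ) < x + β := by linarith
  set s := Real.sqrt (x + α) with hs
  set t := Real.sqrt (x + β) with ht
  have hs0 : 0 < s := Real.sqrt_pos.mpr hxα
  have ht0 : 0 < t := Real.sqrt_pos.mpr hxβ
  have hs2 : s ^ 2 = x + α := Real.sq_sqrt hxα.le
  have ht2 : t ^ 2 = x + β := Real.sq_sqrt hxβ.le
  set u := 1 / x with hu
  have hu0 : 0 < u := by positivity
  have h1α : 0 < 1 + α * u := by nlinarith
  have h1β : 0 < 1 + β * u := by nlinarith
  have hxuα : x * (1 + α * u) = x + α := by rw [hu]; field_simp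
  have hxuβ : x * (1 + β * u) = x + β := by rw [hu]; field_simp
  set A := Real.sqrt (1 + α * u) with hA
  set B := Real.sqrt (1 + β * u) with hB
  have hA0 : 0 < A := Real.sqrt_pos.mpr h1α
  have hB0 : 0 < B := Real.sqrt_pos.mpr h1β
  have hsA : s = Real.sqrt x * A := by
    rw [hs, hA, ← Real.sqrt_mul hx0.le, hxuα]
  have htB : t = Real.sqrt x * B := by
    rw [ht, hB, ← Real.sqrt_mul hx0.le, hxuβ]
  have hr : (s - t) / (s + t) = (α - β) / (s + t) ^ 2 := by
    have h : (s - t) * (s + t) = α - β := by nlinarith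
    field_simp
    nlinarith
  have hst0 : 0 < s + t := by linarith
  have hr2 : ((s - t) / (s + t)) ^ ν = (α - β) ^ ν * (s + t) ^ (-(2 * ν)) := by
    rw [hr, Real.div_rpow (by linarith) (by positivity), ← Real.rpow_natCast (s+t) 2,
      ← Real.rpow_mul hst0.le, div_eq_mul_inv, ← Real.rpow_neg hst0.le]
    norm_num
  have h3 : (1 / s + 1 / t) ^ (k - 2) = (s + t) ^ ((k:ℝ) - 2) * (s * t) ^ (-((k:ℝ) - 2)) := by
    have h : 1 / s + 1 / t = (s + t) / (s * t) := by field_simp; ring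
    rw [h, div_pow, ← Real.rpow_natCast (s+t) (k-2), ← Real.rpow_natCast (s*t) (k-2),
      Nat.cast_sub hk]
    rw [div_eq_mul_inv, ← Real.rpow_neg (by positivity)]
    norm_num
  rw [hr2, h3]
  have hstAB : s + t = Real.sqrt x * (A + B) := by rw [hsA, htB]; ring
  have hstm : s * t = x * (A * B) := by
    rw [hsA, htB, mul_mul_mul_comm, Real.mul_self_sqrt hx0.le]
  have hsqx : Real.sqrt x = x ^ (1 / (2:ℝ)) := Real.sqrt_eq_rpow x
  set E := (k:ℝ) - 2 - 2 * ν with hE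
  have hst0' : 0 < s * t := mul_pos hs0 ht0
  have e1 : (s + t) ^ E = x ^ (E / 2) * (A + B) ^ E := by
    rw [hstAB, Real.mul_rpow (Real.sqrt_nonneg x) (by positivity), hsqx,
      ← Real.rpow_mul hx0.le]
    congr 2
    ring
  have e2 : (s * t) ^ (-((k:ℝ) - 1)) =
      x ^ (-((k:ℝ) - 1)) * ((1 + α * u) * (1 + β * u)) ^ ((1 - (k:ℝ)) / 2) := by
    rw [hstm, Real.mul_rpow hx0.le (by positivity)]
    congr 1
    rw [hA, hB, ← Real.sqrt_mul h1α.le, Real.sqrt_eq_rpow, ← Real.rpow_mul (by positivity)]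
    congr 1
    ring
  have e3 : (A + B) ^ E = 2 ^ E * ((A + B) / 2) ^ E := by
    rw [Real.div_rpow (by positivity) (by norm_num)]
    have h2E : (0:ℝ) < (2:ℝ) ^ E := Real.rpow_pos_of_pos (by norm_num) E
    field_simp
  calc (α - β) ^ ν * (s + t) ^ (-(2 * ν)) / (s * t) *
        ((s + t) ^ ((k:ℝ) - 2) * (s * t) ^ (-((k:ℝ) - 2)))
      = (α - β) ^ ν * ((s + t) ^ (-(2 * ν)) * (s + t) ^ ((k:ℝ) - 2)) *
        ((s * t) ^ (-(1:ℝ)) * (s * t) ^ (-((k:ℝ) - 2))) := by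
        rw [Real.rpow_neg_one]
        ring
    _ = (α - β) ^ ν * (s + t) ^ E * (s * t) ^ (-((k:ℝ) - 1)) := by
        rw [← Real.rpow_add hst0, ← Real.rpow_add hst0', hE]
        congr 2 <;> ring
    _ = 2 ^ E * (α - β) ^ ν * (x ^ (E / 2) * x ^ (-((k:ℝ) - 1))) *
        (((A + B) / 2) ^ E * ((1 + α * u) * (1 + β * u)) ^ ((1 - (k:ℝ)) / 2)) := by
        rw [e1, e2, e3]
        ring
    _ = 2 ^ E * (α - β) ^ ν * x ^ (-(ν + (k:ℝ) / 2)) * Faux k ν α β (1 / x) := by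
        rw [← Real.rpow_add hx0, Faux, ← hu, ← hA, ← hB, ← hE]
        congr 2
        rw [hE]
        ring

lemma r_bound (α β x : ℝ) (hβ : 0 < β) (hαβ : β < α) (hx : 1 ≤ x) :
    0 ≤ (Real.sqrt (x + α) - Real.sqrt (x + β)) / (Real.sqrt (x + α) + Real.sqrt (x + β)) ∧
    (Real.sqrt (x + α) - Real.sqrt (x + β)) / (Real.sqrt (x + α) + Real.sqrt (x + β)) ≤
      (α - β) / (4 * x) := by
  have hx0 : (0:ℝ) < x := by linarith
  have hα0 : 0 < α := lt_trans hβ hαβ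
  have hxα : (0:ℝ) < x + α := by linarith
  have hxβ : (0:ℝ) < x + β := by linarith
  set s := Real.sqrt (x + α) with hsdef
  set t := Real.sqrt (x + β) with htdef
  have hs0 : 0 < s := Real.sqrt_pos.mpr hxα
  have ht0 : 0 < t := Real.sqrt_pos.mpr hxβ
  have hs2 : s ^ 2 = x + α := Real.sq_sqrt hxα.le
  have ht2 : t ^ 2 = x + β := Real.sq_sqrt hxβ.le
  have hts : t ≤ s := Real.sqrt_le_sqrt (by linarith)
  have hst0 : 0 < s + t := by linarith
  have hsx : Real.sqrt x ≤ s := Real.sqrt_le_sqrt (by linarith)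
  have htx : Real.sqrt x ≤ t := Real.sqrt_le_sqrt (by linarith)
  have hq : Real.sqrt x ^ 2 = x := Real.sq_sqrt hx0.le
  have hsq0 : 0 < Real.sqrt x := Real.sqrt_pos.mpr hx0
  have hlb : 4 * x ≤ (s + t) ^ 2 := by nlinarith
  have hid : (s - t) / (s + t) = (α - β) / (s + t) ^ 2 := by
    have h : (s - t) * (s + t) = α - β := by nlinarith
    field_simp
    nlinarith
  constructor
  · apply div_nonneg (by linarith) hst0.le
  · rw [hid]
    exact div_le_div_of_nonneg_left (by linarith) (by linarith) hlb

end Aux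

open Topology

theorem f_asymptotic (k : ℕ) (hk : 2 ≤ k) (ν : ℝ) (hν : 0 < ν)
    (α β : ℝ) (hβ : 0 < β) (hαβ : β < α) :
    (fun x : ℝ =>
        ((((Real.sqrt (x + α) - Real.sqrt (x + β)) /
            (Real.sqrt (x + α) + Real.sqrt (x + β))) ^ ν /
            (Real.sqrt (x + α) * Real.sqrt (x + β)) *
            (1 / Real.sqrt (x + α) + 1 / Real.sqrt (x + β)) ^ (k - 2) : ℝ) : ℂ) *
          hyp2F1 ((ν : ℂ) + 1 - k / 2) (1 - (k : ℂ) / 2) ((ν : ℂ) + 1)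
            ((((Real.sqrt (x + α) - Real.sqrt (x + β)) /
                (Real.sqrt (x + α) + Real.sqrt (x + β))) ^ 2 : ℝ) : ℂ) -
          (((2 : ℝ) ^ ((k : ℝ) - 2 - 2 * ν) * (α - β) ^ ν *
              x ^ (-(ν + (k : ℝ) / 2)) : ℝ) : ℂ)) =O[atTop]
      fun x : ℝ => x ^ (-(ν + (k : ℝ) / 2) - 1) := by
  have hα0 : 0 < α := lt_trans hβ hαβ
  set p : ℝ := -(ν + (k : ℝ) / 2) with hp
  set c : ℝ := (2 : ℝ) ^ ((k : ℝ) - 2 - 2 * ν) * (α - β) ^ ν with hc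
  set a : ℂ := (ν : ℂ) + 1 - k / 2 with ha
  set b : ℂ := 1 - (k : ℂ) / 2 with hb
  set M : ℝ := (‖a‖ + 1) * (‖b‖ + 1) with hM
  have hM1 : (1:ℝ) ≤ M := by nlinarith [norm_nonneg a, norm_nonneg b]
  set g : ℝ → ℝ := fun x => ((Real.sqrt (x + α) - Real.sqrt (x + β)) /
      (Real.sqrt (x + α) + Real.sqrt (x + β))) ^ ν /
      (Real.sqrt (x + α) * Real.sqrt (x + β)) *
      (1 / Real.sqrt (x + α) + 1 / Real.sqrt (x + β)) ^ (k - 2) with hg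
  set z : ℝ → ℝ := fun x => ((Real.sqrt (x + α) - Real.sqrt (x + β)) /
      (Real.sqrt (x + α) + Real.sqrt (x + β))) ^ 2 with hz
  set H : ℝ → ℂ := fun x => hyp2F1 a b ((ν : ℂ) + 1) ((z x : ℝ) : ℂ) with hH
  -- Part A : g = O(x^p)
  have hgO : (fun x : ℝ => g x) =O[atTop] fun x => x ^ p := by
    have h1 : (fun x : ℝ => c * Faux k ν α β (1/x) * x ^ p) =O[atTop] fun x => x ^ p := by
      have := (((Faux_tendsto k ν α β).const_mul c).isBigO_one ℝ).mul
        (isBigO_refl (fun x : ℝ => x ^ p) atTop)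
      simpa using this
    refine h1.congr' ?_ EventuallyEq.rfl
    filter_upwards [eventually_ge_atTop 1] with x hx
    rw [hg]
    dsimp only
    rw [key_id k hk ν α β hν hβ hαβ x hx, hc, hp]
    ring
  -- Part C : g - c x^p = O(x^{p-1})
  have hC : (fun x : ℝ => g x - c * x ^ p) =O[atTop] fun x => x ^ (p - 1) := by
    obtain ⟨d, hd⟩ := Faux_slope k ν α β
    have h1 : (fun x : ℝ => c * ((Faux k ν α β (1/x) - 1) * x) * x ^ (p-1)) =O[atTop]
        fun x => x ^ (p - 1) := by
      have := ((hd.const_mul c).isBigO_one ℝ).mul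
        (isBigO_refl (fun x : ℝ => x ^ (p - 1)) atTop)
      simpa using this
    refine h1.congr' ?_ EventuallyEq.rfl
    filter_upwards [eventually_ge_atTop 1] with x hx
    have hx0 : (0:ℝ) < x := by linarith
    have hxp : x ^ p = x ^ (p - 1) * x := by
      rw [← Real.rpow_add_one hx0.ne' (p - 1)]
      norm_num
    rw [hg]
    dsimp only
    rw [key_id k hk ν α β hν hβ hαβ x hx, hc, hp, ← hp, ← hc, hxp]
    ring
  -- Part B : H - 1 = O(x^{-2})
  have hHO : (fun x : ℝ => H x - 1) =O[atTop] fun x : ℝ => x ^ (-2 : ℝ) := by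
    rw [isBigO_iff]
    refine ⟨2 * M * ((α - β) ^ 2 / 16), ?_⟩
    have hq0 : Tendsto (fun x : ℝ => M * (α - β) ^ 2 / (16 * x ^ 2)) atTop (𝓝 0) := by
      apply Tendsto.div_atTop tendsto_const_nhds
      apply Tendsto.const_mul_atTop (by norm_num : (0:ℝ) < 16)
      exact tendsto_pow_atTop (by norm_num)
    filter_upwards [eventually_ge_atTop 1, hq0.eventually (eventually_le_nhds (by norm_num :
        (0:ℝ) < 1/2))] with x hx hhalf
    have hx0 : (0:ℝ) < x := by linarith
    obtain ⟨hr0, hrle⟩ := r_bound α β x hβ hαβ hx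
    have hzval : z x = ((Real.sqrt (x + α) - Real.sqrt (x + β)) /
        (Real.sqrt (x + α) + Real.sqrt (x + β))) ^ 2 := rfl
    have hzle : z x ≤ (α - β) ^ 2 / (16 * x ^ 2) := by
      rw [hzval]
      calc _ ≤ ((α - β) / (4 * x)) ^ 2 := by
            apply pow_le_pow_left₀ hr0 hrle
        _ = (α - β) ^ 2 / (16 * x ^ 2) := by
            rw [div_pow]; congr 1; ring
    have hz0 : 0 ≤ z x := by rw [hzval]; positivity
    have hznorm : ‖((z x : ℝ) : ℂ)‖ = z x := by
      rw [Complex.norm_real, Real.norm_eq_abs, abs_of_nonneg hz0]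
    have hMz : M * ‖((z x : ℝ) : ℂ)‖ ≤ 1/2 := by
      rw [hznorm]
      calc M * z x ≤ M * ((α - β) ^ 2 / (16 * x ^ 2)) :=
            mul_le_mul_of_nonneg_left hzle (by linarith)
        _ = M * (α - β) ^ 2 / (16 * x ^ 2) := by ring
        _ ≤ 1/2 := hhalf
    have hcν : ((ν : ℂ) + 1) = (((ν + 1 : ℝ) : ℝ) : ℂ) := by push_cast; ring
    have htail : ‖H x - 1‖ ≤ 2 * M * ‖((z x : ℝ) : ℂ)‖ := by
      rw [hH]
      dsimp only
      rw [hcν]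
      exact hyp_tail a b (ν + 1) (by linarith) _ (by rw [← hM]; exact hMz)
    have hx2 : ‖(x : ℝ) ^ (-2 : ℝ)‖ = 1 / x ^ 2 := by
      rw [Real.norm_eq_abs, abs_of_pos (Real.rpow_pos_of_pos hx0 _)]
      rw [Real.rpow_neg hx0.le, ← Real.rpow_natCast x 2]
      norm_num
    calc ‖H x - 1‖ ≤ 2 * M * ‖((z x : ℝ) : ℂ)‖ := htail
      _ = 2 * M * z x := by rw [hznorm]
      _ ≤ 2 * M * ((α - β) ^ 2 / (16 * x ^ 2)) := by
          apply mul_le_mul_of_nonneg_left _ (by linarith)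
          calc z x ≤ (α - β) ^ 2 / (16 * x ^ 2) := hzle
            _ = (α - β) ^ 2 / 16 * (1 / x ^ 2) := by ring
            _ = (α - β) ^ 2 / (16 * x ^ 2) := by ring
      _ = 2 * M * ((α - β) ^ 2 / 16) * (1 / x ^ 2) := by ring
      _ = 2 * M * ((α - β) ^ 2 / 16) * ‖(x : ℝ) ^ (-2 : ℝ)‖ := by rw [hx2]
  -- coercions to ℂ
  have hgC : (fun x : ℝ => ((g x : ℝ) : ℂ)) =O[atTop] fun x => x ^ p :=
    (Complex.ofRealCLM.isBigO_comp _ _).trans hgO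
  have hCC : (fun x : ℝ => ((g x - c * x ^ p : ℝ) : ℂ)) =O[atTop] fun x => x ^ (p - 1) :=
    (Complex.ofRealCLM.isBigO_comp _ _).trans hC
  -- product part
  have hmul : (fun x : ℝ => ((g x : ℝ) : ℂ) * (H x - 1)) =O[atTop] fun x => x ^ (p - 1) := by
    have h1 := hgC.mul hHO
    refine h1.trans ?_
    rw [isBigO_iff]
    refine ⟨1, ?_⟩
    filter_upwards [eventually_ge_atTop 1] with x hx
    have hx0 : (0:ℝ) < x := by linarith
    have h2 : x ^ p * x ^ (-2:ℝ) = x ^ (p - 2) := by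
      rw [← Real.rpow_add hx0, sub_eq_add_neg]
    rw [Real.norm_eq_abs, Real.norm_eq_abs, h2,
      abs_of_pos (Real.rpow_pos_of_pos hx0 _), abs_of_pos (Real.rpow_pos_of_pos hx0 _),
      one_mul]
    exact Real.rpow_le_rpow_of_exponent_le hx (by linarith)
  -- assemble
  have hfinal : (fun x : ℝ => ((g x : ℝ) : ℂ) * H x - ((c * x ^ p : ℝ) : ℂ)) =O[atTop]
      fun x : ℝ => x ^ (p - 1) := by
    have hsum := hmul.add hCC
    refine hsum.congr' ?_ EventuallyEq.rfl
    filter_upwards with x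
    push_cast
    ring
  refine hfinal.congr' ?_ EventuallyEq.rfl
  filter_upwards with x
  rw [hg, hc, hp, hH, hz, ha, hb]
end

section
/- Hardy-type identity for sums of squares (Corollary): for any integer k ≥ 2 and real β > 0, Σ_{n=0}^∞ r_k(n) e^{−2π√(nβ)} = √β · Γ((k+1)/2) / π^{(k+1)/2} · Σ_{n=0}^∞ r_k(n)/(n+β)^{(k+1)/2}, where r_k(0) := 1. -/
open scoped BigOperators Real

open scoped ENNReal
open MeasureTheory Set Real
set_option linter.unusedSectionVars false
set_option linter.unusedVariables false

lemma sum_sq_nonneg {k : ℕ} (v : Fin k → ℤ) : (0:ℤ) ≤ ∑ i, (v i) ^ 2 :=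
  Finset.sum_nonneg fun i _ => sq_nonneg _

lemma finite_fiber (k n : ℕ) : Finite {v : Fin k → ℤ // ∑ i, (v i) ^ 2 = (n : ℤ)} := by
  have hsub : {v : Fin k → ℤ | ∑ i, (v i) ^ 2 = (n : ℤ)} ⊆
      Set.Icc (fun _ => -(n:ℤ)) (fun _ => (n:ℤ)) := by
    intro v hv
    simp only [Set.mem_setOf_eq] at hv
    rw [Set.mem_Icc]
    have h1 : ∀ i, (v i) ^ 2 ≤ (n:ℤ) := fun i => by
      rw [← hv]
      exact Finset.single_le_sum (fun j _ => sq_nonneg (v j)) (Finset.mem_univ i)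
    constructor
    · intro i
      show -(n:ℤ) ≤ v i
      nlinarith [h1 i, sq_nonneg (v i + 1)]
    · intro i
      show v i ≤ (n:ℤ)
      nlinarith [h1 i, sq_nonneg (v i - 1)]
  exact ((Set.finite_Icc _ _).subset hsub).to_subtype

/-- key sigma decomposition -/
lemma tsum_rsq (k : ℕ) (g : ℕ → ℝ≥0∞) :
    ∑' v : Fin k → ℤ, g (∑ i, (v i) ^ 2).toNat = ∑' n : ℕ, (rsq k n : ℝ≥0∞) * g n := by
  rw [← (Equiv.sigmaFiberEquiv (fun v : Fin k → ℤ => (∑ i, (v i) ^ 2).toNat)).tsum_eq]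
  rw [ENNReal.tsum_sigma']
  congr 1
  ext n
  have hfib : ∀ b : {v : Fin k → ℤ // (∑ i, (v i) ^ 2).toNat = n},
      g (∑ i, ((b:Fin k → ℤ) i) ^ 2).toNat = g n := by
    rintro ⟨v, hv⟩; simp [hv]
  calc ∑' b : {v : Fin k → ℤ // (∑ i, (v i) ^ 2).toNat = n},
        g (∑ i, ((Equiv.sigmaFiberEquiv _) ⟨n, b⟩ i) ^ 2).toNat
      = ∑' _b : {v : Fin k → ℤ // (∑ i, (v i) ^ 2).toNat = n}, g n := by
        exact tsum_congr fun b => hfib b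
    _ = (rsq k n : ℝ≥0∞) * g n := by
        have hequiv : {v : Fin k → ℤ // (∑ i, (v i) ^ 2).toNat = n} ≃
            {v : Fin k → ℤ // ∑ i, (v i) ^ 2 = (n:ℤ)} := by
          apply Equiv.subtypeEquivRight
          intro v
          have := sum_sq_nonneg v
          omega
        have hfin : Finite {v : Fin k → ℤ // ∑ i, (v i) ^ 2 = (n:ℤ)} := finite_fiber k n
        have : Finite {v : Fin k → ℤ // (∑ i, (v i) ^ 2).toNat = n} :=
          Finite.of_equiv _ hequiv.symm
        have := Fintype.ofFinite {v : Fin k → ℤ // (∑ i, (v i) ^ 2).toNat = n}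
        rw [tsum_fintype, Finset.sum_const, nsmul_eq_mul]
        congr 2
        rw [rsq, ← Nat.card_congr hequiv, Nat.card_eq_fintype_card, Finset.card_univ]

lemma tsum_pi_prod (k : ℕ) (h : ℤ → ℝ≥0∞) :
    ∑' v : Fin k → ℤ, ∏ i, h (v i) = (∑' x : ℤ, h x) ^ k := by
  induction k with
  | zero =>
    simp only [Finset.univ_eq_empty, Finset.prod_empty, pow_zero]
    exact tsum_eq_single (fun _ => 0) fun b hb => absurd (Subsingleton.elim b _) hb
  | succ k ih =>
    rw [← (Fin.consEquiv (fun _ : Fin (k+1) => ℤ)).tsum_eq, ENNReal.tsum_prod']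
    have : ∀ (x : ℤ) (w : Fin k → ℤ),
        ∏ i, h ((Fin.consEquiv (fun _ : Fin (k+1) => ℤ)) (x, w) i) = h x * ∏ i, h (w i) := by
      intro x w
      rw [Fin.prod_univ_succ]
      rfl
    simp_rw [this]
    rw [pow_succ, mul_comm ((∑' x : ℤ, h x) ^ k)]
    simp_rw [ENNReal.tsum_mul_left, ih, ← ENNReal.tsum_mul_right]

lemma summable_exp_neg_abs_int {b : ℝ} (hb : 0 < b) :
    Summable fun n : ℤ => Real.exp (-b * |(n : ℝ)|) := by
  have hnat : Summable fun n : ℕ => Real.exp (-b * n) := by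
    have : ∀ n : ℕ, Real.exp (-b * n) = (Real.exp (-b)) ^ n := by
      intro n; rw [← Real.exp_nat_mul]; ring_nf
    rw [funext this]
    exact summable_geometric_of_lt_one (Real.exp_pos _).le
      (Real.exp_lt_one_iff.mpr (by linarith))
  apply Summable.of_nat_of_neg
  · refine hnat.congr fun n => ?_
    simp [abs_of_nonneg (by positivity : (0:ℝ) ≤ (n:ℝ))]
  · refine hnat.congr fun n => ?_
    push_cast
    rw [abs_neg, abs_of_nonneg (by positivity : (0:ℝ) ≤ (n:ℝ))]

lemma abs_le_sq_int (n : ℤ) : |(n : ℝ)| ≤ (n : ℝ) ^ 2 := by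
  rcases eq_or_ne n 0 with h | h
  · simp [h]
  · have h1 : (1:ℝ) ≤ |(n:ℝ)| := by
      rw [← Int.cast_abs]
      exact_mod_cast Int.one_le_abs (by exact_mod_cast h)
    calc |(n:ℝ)| = 1 * |(n:ℝ)| := (one_mul _).symm
      _ ≤ |(n:ℝ)| * |(n:ℝ)| := by nlinarith
      _ = (n:ℝ)^2 := by rw [← abs_mul, ← sq, abs_sq]

lemma summable_exp_neg_sq_int {b : ℝ} (hb : 0 < b) :
    Summable fun n : ℤ => Real.exp (-b * (n : ℝ) ^ 2) := by
  refine Summable.of_nonneg_of_le (fun n => (Real.exp_pos _).le)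
    (fun n => ?_) (summable_exp_neg_abs_int hb)
  apply Real.exp_le_exp.mpr
  have := abs_le_sq_int n
  nlinarith [abs_nonneg ((n:ℝ))]

lemma theta_one {a : ℝ} (ha : 0 < a) :
    ∑' n : ℤ, ENNReal.ofReal (Real.exp (-π * a * (n : ℝ) ^ 2)) =
      ENNReal.ofReal (1 / a ^ ((1:ℝ) / 2)) *
        ∑' n : ℤ, ENNReal.ofReal (Real.exp (-π / a * (n : ℝ) ^ 2)) := by
  rw [← ENNReal.ofReal_tsum_of_nonneg (fun n => (Real.exp_pos _).le)
    (by simpa [neg_mul, mul_assoc] using summable_exp_neg_sq_int (by positivity : 0 < π * a)),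
    ← ENNReal.ofReal_tsum_of_nonneg (fun n => (Real.exp_pos _).le)
    (by simpa [neg_div, neg_mul] using summable_exp_neg_sq_int (by positivity : 0 < π / a)),
    ← ENNReal.ofReal_mul (by positivity)]
  rw [Real.tsum_exp_neg_mul_int_sq ha]

lemma tsum_exp_prod (k : ℕ) (c : ℝ) :
    ∑' v : Fin k → ℤ, ENNReal.ofReal (Real.exp (-c * ∑ i, ((v i : ℝ)) ^ 2)) =
      (∑' x : ℤ, ENNReal.ofReal (Real.exp (-c * (x : ℝ) ^ 2))) ^ k := by
  rw [← tsum_pi_prod k (fun x => ENNReal.ofReal (Real.exp (-c * (x : ℝ) ^ 2)))]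
  refine tsum_congr fun v => ?_
  rw [← ENNReal.ofReal_prod_of_nonneg (fun i _ => (Real.exp_pos _).le), ← Real.exp_sum,
    Finset.mul_sum]

lemma theta_k (k : ℕ) {a : ℝ} (ha : 0 < a) :
    ∑' v : Fin k → ℤ, ENNReal.ofReal (Real.exp (-π * a * ∑ i, ((v i : ℝ)) ^ 2)) =
      ENNReal.ofReal ((1 / a ^ ((1:ℝ) / 2)) ^ k) *
        ∑' v : Fin k → ℤ, ENNReal.ofReal (Real.exp (-π / a * ∑ i, ((v i : ℝ)) ^ 2)) := by
  have h1 := tsum_exp_prod k (π * a)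
  have h2 := tsum_exp_prod k (π / a)
  simp only [neg_mul, neg_div] at *
  rw [h1, h2, ENNReal.ofReal_pow (by positivity), ← mul_pow]
  congr 1
  have := theta_one ha
  simp only [neg_mul, neg_div] at this
  rw [this]
lemma contOn_subord (c : ℝ) :
    ContinuousOn (fun t : ℝ => rexp (-t - c / t) * t ^ (-(1/2) : ℝ)) (Ioi 0) := by
  intro t ht
  have ht' : (0:ℝ) < t := ht
  refine ContinuousWithinAt.mul ?_ ?_
  · exact (Real.continuous_exp.continuousAt.comp
      (((continuous_neg.continuousAt).sub
        ((continuousAt_const.div continuousAt_id ht'.ne'))))).continuousWithinAt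
  · exact (Real.continuousAt_rpow_const t _ (Or.inl ht'.ne')).continuousWithinAt

lemma integrable_subord {c : ℝ} (hc : 0 ≤ c) :
    IntegrableOn (fun t : ℝ => rexp (-t - c / t) * t ^ (-(1/2) : ℝ)) (Ioi 0) := by
  have base : IntegrableOn (fun t : ℝ => rexp (-t) * t ^ ((1/2 : ℝ) - 1)) (Ioi 0) :=
    Real.GammaIntegral_convergent (by norm_num)
  refine base.mono' ((contOn_subord c).aestronglyMeasurable measurableSet_Ioi) ?_
  filter_upwards [self_mem_ae_restrict measurableSet_Ioi] with t ht
  have ht' : (0:ℝ) < t := ht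
  have h0 : (0:ℝ) ≤ rexp (-t - c / t) * t ^ (-(1/2) : ℝ) := by positivity
  rw [Real.norm_of_nonneg h0]
  have he : ((1/2:ℝ) - 1) = (-(1/2) : ℝ) := by norm_num
  rw [he]
  have hct : 0 ≤ c / t := by positivity
  gcongr
  linarith
section JK
variable {a : ℝ} (ha : 0 < a)

-- integrand bounds
lemma sq_expand (s : ℝ) (hs : s ≠ 0) : (s - a / s) ^ 2 = s ^ 2 - 2 * a + (a / s) ^ 2 := by
  field_simp
  ring

include ha in
lemma J_integrable : IntegrableOn (fun s : ℝ => rexp (-(s - a / s) ^ 2)) (Ioi 0) := by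
  have hcont : ContinuousOn (fun s : ℝ => rexp (-(s - a / s) ^ 2)) (Ioi 0) := by
    intro s hs
    have hs' : (0:ℝ) < s := hs
    exact (Real.continuous_exp.continuousAt.comp
      (((continuousAt_id.sub (continuousAt_const.div continuousAt_id hs'.ne')).pow 2).neg)).continuousWithinAt
  have base : IntegrableOn (fun s : ℝ => rexp (2 * a) * rexp (-1 * s ^ 2)) (Ioi 0) :=
    (((integrable_exp_neg_mul_sq one_pos).const_mul _)).integrableOn
  refine base.mono' (hcont.aestronglyMeasurable measurableSet_Ioi) ?_
  filter_upwards [self_mem_ae_restrict measurableSet_Ioi] with s hs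
  have hs' : (0:ℝ) < s := hs
  rw [Real.norm_of_nonneg (Real.exp_pos _).le, ← Real.exp_add]
  apply Real.exp_le_exp.mpr
  have := sq_expand (a := a) s hs'.ne'
  nlinarith [sq_nonneg (a / s)]

include ha in
lemma K_bound {s : ℝ} (hs : 0 < s) :
    a / s ^ 2 * rexp (-(s - a / s) ^ 2) ≤ rexp (2 * a) / a * rexp (-1 * s ^ 2) := by
  have hexp : -(s - a / s) ^ 2 = -1 * s ^ 2 + 2 * a + -((a / s) ^ 2) := by
    have := sq_expand (a := a) s hs.ne'
    linarith
  rw [hexp, Real.exp_add, Real.exp_add]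
  have hu : (a / s) ^ 2 * rexp (-((a / s) ^ 2)) ≤ 1 := by
    rw [Real.exp_neg]
    have h1 : (a / s) ^ 2 ≤ rexp ((a / s) ^ 2) := by
      have := Real.add_one_le_exp ((a / s) ^ 2); linarith
    calc (a / s) ^ 2 * (rexp ((a / s) ^ 2))⁻¹
        ≤ rexp ((a / s) ^ 2) * (rexp ((a / s) ^ 2))⁻¹ := by gcongr
      _ = 1 := mul_inv_cancel₀ (Real.exp_pos _).ne'
  have hkey : a / s ^ 2 = (a / s) ^ 2 / a := by
    field_simp
  rw [hkey]
  calc (a / s) ^ 2 / a * (rexp (-1 * s ^ 2) * rexp (2 * a) * rexp (-((a / s) ^ 2)))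
      = (rexp (-1 * s ^ 2) * rexp (2 * a) / a) * ((a / s) ^ 2 * rexp (-((a / s) ^ 2))) := by
        ring
    _ ≤ (rexp (-1 * s ^ 2) * rexp (2 * a) / a) * 1 := by
        apply mul_le_mul_of_nonneg_left hu
        positivity
    _ = rexp (2 * a) / a * rexp (-1 * s ^ 2) := by ring

include ha in
lemma K_integrable : IntegrableOn (fun s : ℝ => a / s ^ 2 * rexp (-(s - a / s) ^ 2)) (Ioi 0) := by
  have hcont : ContinuousOn (fun s : ℝ => a / s ^ 2 * rexp (-(s - a / s) ^ 2)) (Ioi 0) := by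
    intro s hs
    have hs' : (0:ℝ) < s := hs
    refine ContinuousWithinAt.mul ?_ ?_
    · exact (continuousAt_const.div (continuousAt_id.pow 2) (pow_ne_zero 2 hs'.ne')).continuousWithinAt
    · exact (Real.continuous_exp.continuousAt.comp
        (((continuousAt_id.sub (continuousAt_const.div continuousAt_id hs'.ne')).pow 2).neg)).continuousWithinAt
  have base : IntegrableOn (fun s : ℝ => rexp (2 * a) / a * rexp (-1 * s ^ 2)) (Ioi 0) :=
    (((integrable_exp_neg_mul_sq one_pos).const_mul _)).integrableOn
  refine base.mono' (hcont.aestronglyMeasurable measurableSet_Ioi) ?_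
  filter_upwards [self_mem_ae_restrict measurableSet_Ioi] with s hs
  have hs' : (0:ℝ) < s := hs
  rw [Real.norm_of_nonneg (by positivity)]
  exact K_bound ha hs'

end JK

section CV
variable {a : ℝ}

lemma psi_hasDeriv (ha : 0 < a) {s : ℝ} (hs : s ∈ Ioi (0:ℝ)) :
    HasDerivWithinAt (fun s : ℝ => s - a / s) (1 + a / s ^ 2) (Ioi 0) s := by
  have hs' : (0:ℝ) < s := hs
  have h := (hasDerivAt_id s).sub ((hasDerivAt_inv hs'.ne').const_mul a)
  have : (1 : ℝ) - a * -(s ^ 2)⁻¹ = 1 + a / s ^ 2 := by field_simp; ring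
  rw [this] at h
  exact (h.congr_of_eventuallyEq (by
    filter_upwards [eventually_ne_nhds hs'.ne'] with x hx
    simp [div_eq_mul_inv])).hasDerivWithinAt

lemma psi_inj (ha : 0 < a) : InjOn (fun s : ℝ => s - a / s) (Ioi 0) := by
  have hmono : StrictMonoOn (fun s : ℝ => s - a / s) (Ioi 0) := by
    intro x hx y hy hxy
    have hx' : (0:ℝ) < x := hx
    have hy' : (0:ℝ) < y := hy
    have : a / y < a / x := by
      apply div_lt_div_of_pos_left ha hx' hxy
    simp only
    linarith
  exact hmono.injOn

lemma psi_image (ha : 0 < a) : (fun s : ℝ => s - a / s) '' Ioi 0 = univ := by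
  apply eq_univ_of_forall
  intro w
  set D := Real.sqrt (w ^ 2 + 4 * a) with hD
  have hD2 : D ^ 2 = w ^ 2 + 4 * a := Real.sq_sqrt (by positivity)
  have hDgt : w < D := by
    have h1 : |w| < D := by
      rw [← Real.sqrt_sq_eq_abs]
      exact Real.sqrt_lt_sqrt (sq_nonneg w) (by linarith)
    calc w ≤ |w| := le_abs_self w
      _ < D := h1
  have hDgt' : -w < D := by
    have h1 : |w| < D := by
      rw [← Real.sqrt_sq_eq_abs]
      exact Real.sqrt_lt_sqrt (sq_nonneg w) (by linarith)
    calc -w ≤ |w| := neg_le_abs w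
      _ < D := h1
  set s := (w + D) / 2 with hs
  have hspos : 0 < s := by rw [hs]; linarith
  refine ⟨s, hspos, ?_⟩
  show s - a / s = w
  have hs2 : s ^ 2 = w * s + a := by
    rw [hs]; nlinarith [hD2]
  field_simp
  linarith [hs2]

lemma chi_hasDeriv (ha : 0 < a) {s : ℝ} (hs : s ∈ Ioi (0:ℝ)) :
    HasDerivWithinAt (fun s : ℝ => a / s) (-(a / s ^ 2)) (Ioi 0) s := by
  have hs' : (0:ℝ) < s := hs
  have h := (hasDerivAt_inv hs'.ne').const_mul a
  have : a * -(s ^ 2)⁻¹ = -(a / s ^ 2) := by field_simp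
  rw [this] at h
  exact (h.congr_of_eventuallyEq (by
    filter_upwards [eventually_ne_nhds hs'.ne'] with x hx
    simp [div_eq_mul_inv])).hasDerivWithinAt

lemma chi_inj (ha : 0 < a) : InjOn (fun s : ℝ => a / s) (Ioi 0) := by
  intro x hx y hy hxy
  have hx' : (0:ℝ) < x := hx
  have hy' : (0:ℝ) < y := hy
  simp only at hxy
  rw [div_eq_div_iff hx'.ne' hy'.ne'] at hxy
  exact (mul_left_cancel₀ ha.ne' hxy).symm

lemma chi_image (ha : 0 < a) : (fun s : ℝ => a / s) '' Ioi 0 = Ioi 0 := by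
  ext x
  constructor
  · rintro ⟨s, hs, rfl⟩
    have hs' : (0:ℝ) < s := hs
    exact div_pos ha hs'
  · intro hx
    have hx' : (0:ℝ) < x := hx
    exact ⟨a / x, div_pos ha hx', by field_simp⟩

end CV

section Jval
variable {a : ℝ}

lemma K_eq_J (ha : 0 < a) :
    ∫ s in Ioi (0:ℝ), a / s ^ 2 * rexp (-(s - a / s) ^ 2) =
      ∫ s in Ioi (0:ℝ), rexp (-(s - a / s) ^ 2) := by
  have h := integral_image_eq_integral_abs_deriv_smul measurableSet_Ioi
    (fun s hs => chi_hasDeriv ha hs) (chi_inj ha) (fun x => rexp (-(x - a / x) ^ 2))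
  rw [chi_image ha] at h
  rw [h]
  apply setIntegral_congr_fun measurableSet_Ioi
  intro s hs
  have hs' : (0:ℝ) < s := hs
  have h1 : |-(a / s ^ 2)| = a / s ^ 2 := by
    rw [abs_neg, abs_of_pos (by positivity)]
  have h2 : a / (a / s) = s := by field_simp
  have h3 : (a / s - s) ^ 2 = (s - a / s) ^ 2 := by ring
  simp only [smul_eq_mul, h1, h2, h3]

lemma sqrtpi_eq (ha : 0 < a) :
    Real.sqrt π = (∫ s in Ioi (0:ℝ), rexp (-(s - a / s) ^ 2)) +
      ∫ s in Ioi (0:ℝ), a / s ^ 2 * rexp (-(s - a / s) ^ 2) := by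
  have h := integral_image_eq_integral_abs_deriv_smul measurableSet_Ioi
    (fun s hs => psi_hasDeriv ha hs) (psi_inj ha) (fun x => rexp (-x ^ 2))
  rw [psi_image ha] at h
  have hgauss : ∫ x in (univ : Set ℝ), rexp (-x ^ 2) = Real.sqrt π := by
    rw [Measure.restrict_univ]
    have := integral_gaussian 1
    simpa using this
  rw [hgauss] at h
  rw [h]
  rw [← integral_add (J_integrable ha) (K_integrable ha)]
  apply setIntegral_congr_fun measurableSet_Ioi
  intro s hs
  have hs' : (0:ℝ) < s := hs
  simp only [smul_eq_mul, abs_of_pos (by positivity : (0:ℝ) < 1 + a / s ^ 2)]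
  ring

lemma J_value (ha : 0 < a) :
    ∫ s in Ioi (0:ℝ), rexp (-(s - a / s) ^ 2) = Real.sqrt π / 2 := by
  have h1 := sqrtpi_eq ha
  rw [K_eq_J ha] at h1
  linarith

end Jval

lemma sq_image : (fun s : ℝ => s ^ 2) '' Ioi 0 = Ioi 0 := by
  ext x
  constructor
  · rintro ⟨s, hs, rfl⟩
    exact pow_pos (show (0:ℝ) < s from hs) 2
  · intro hx
    have hx' : (0:ℝ) < x := hx
    exact ⟨Real.sqrt x, Real.sqrt_pos.mpr hx', Real.sq_sqrt hx'.le⟩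

lemma sq_inj : InjOn (fun s : ℝ => s ^ 2) (Ioi 0) := by
  intro x hx y hy hxy
  have hx' : (0:ℝ) < x := hx
  have hy' : (0:ℝ) < y := hy
  simp only at hxy
  nlinarith [sq_nonneg (x - y), sq_nonneg (x + y)]

lemma sq_hasDeriv {s : ℝ} (hs : s ∈ Ioi (0:ℝ)) :
    HasDerivWithinAt (fun s : ℝ => s ^ 2) (2 * s) (Ioi 0) s := by
  simpa using (hasDerivAt_pow 2 s).hasDerivWithinAt (s := Ioi 0)

/-- Subordination formula. -/
lemma subord_integral {c : ℝ} (hc : 0 ≤ c) :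
    ∫ t in Ioi (0:ℝ), rexp (-t - c / t) * t ^ (-(1/2) : ℝ) =
      Real.sqrt π * rexp (-2 * Real.sqrt c) := by
  rcases eq_or_lt_of_le hc with h0 | hcpos
  · -- c = 0
    rw [← h0]
    have h1 : ∫ t in Ioi (0:ℝ), rexp (-t - 0 / t) * t ^ (-(1/2) : ℝ)
        = ∫ t in Ioi (0:ℝ), rexp (-t) * t ^ ((1/2 : ℝ) - 1) := by
      apply setIntegral_congr_fun measurableSet_Ioi
      intro t ht
      norm_num
    rw [h1, ← Real.Gamma_eq_integral (by norm_num : (0:ℝ) < 1/2), Real.Gamma_one_half_eq]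
    simp
  · -- c > 0
    set a := Real.sqrt c with haa
    have ha : 0 < a := Real.sqrt_pos.mpr hcpos
    have ha2 : a ^ 2 = c := Real.sq_sqrt hc
    have h := integral_image_eq_integral_abs_deriv_smul measurableSet_Ioi
      (fun s hs => sq_hasDeriv hs) sq_inj
      (fun t => rexp (-t - c / t) * t ^ (-(1/2) : ℝ))
    rw [sq_image] at h
    rw [h]
    have h2 : ∀ s ∈ Ioi (0:ℝ),
        |2 * s| • (rexp (-(s^2) - c / s^2) * (s^2) ^ (-(1/2) : ℝ)) =
          (2 * rexp (-2 * a)) * rexp (-(s - a / s) ^ 2) := by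
      intro s hs
      have hs' : (0:ℝ) < s := hs
      have hrp : ((s^2 : ℝ)) ^ (-(1/2) : ℝ) = s⁻¹ := by
        rw [← Real.rpow_natCast s 2, ← Real.rpow_mul hs'.le]
        norm_num [Real.rpow_neg_one]
      have hexp : -(s^2) - c / s^2 = -(s - a / s) ^ 2 + -2 * a := by
        have h3 : (s - a / s) ^ 2 = s ^ 2 - 2 * a + (a / s) ^ 2 := sq_expand s hs'.ne'
        have h4 : (a / s) ^ 2 = c / s ^ 2 := by
          rw [div_pow, ha2]
        nlinarith [h3, h4]
      rw [smul_eq_mul, abs_of_pos (by positivity : (0:ℝ) < 2 * s), hrp, hexp, Real.exp_add]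
      field_simp
    rw [setIntegral_congr_fun measurableSet_Ioi h2, MeasureTheory.integral_const_mul, J_value ha]
    rw [haa]
    ring

lemma tsum_toReal_ofReal {α : Type*} [Countable α] {f : α → ℝ} (hf : ∀ n, 0 ≤ f n) :
    (∑' n, ENNReal.ofReal (f n)).toReal = ∑' n, f n := by
  by_cases hs : Summable f
  · rw [← ENNReal.ofReal_tsum_of_nonneg hf hs, ENNReal.toReal_ofReal (tsum_nonneg hf)]
  · rw [tsum_eq_zero_of_not_summable hs]
    have htop : ∑' n, ENNReal.ofReal (f n) = ⊤ := by
      by_contra h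
      have h2 := ENNReal.summable_toReal h
      refine hs (h2.congr fun n => ?_)
      rw [ENNReal.toReal_ofReal (hf n)]
    rw [htop]
    rfl

lemma lint_gamma {s r : ℝ} (hs : 0 < s) (hr : 0 < r) :
    ∫⁻ t in Ioi (0:ℝ), ENNReal.ofReal (t ^ (s - 1) * rexp (-(r * t))) =
      ENNReal.ofReal ((1 / r) ^ s * Real.Gamma s) := by
  have hint : IntegrableOn (fun t : ℝ => t ^ (s - 1) * rexp (-(r * t))) (Ioi 0) := by
    have := integrableOn_rpow_mul_exp_neg_mul_rpow (p := 1) (s := s - 1) (b := r)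
      (by linarith) zero_lt_one hr
    refine this.congr_fun (fun t ht => ?_) measurableSet_Ioi
    beta_reduce
    rw [Real.rpow_one]
    ring_nf
  rw [← ofReal_integral_eq_lintegral_ofReal hint ?_, integral_rpow_mul_exp_neg_mul_Ioi hs hr]
  filter_upwards [self_mem_ae_restrict measurableSet_Ioi] with t ht
  have ht' : (0:ℝ) < t := ht
  positivity


lemma lint_subord {c : ℝ} (hc : 0 ≤ c) :
    ∫⁻ t in Ioi (0:ℝ), ENNReal.ofReal (rexp (-t - c / t) * t ^ (-(1/2) : ℝ)) =
      ENNReal.ofReal (Real.sqrt π * rexp (-2 * Real.sqrt c)) := by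
  rw [← ofReal_integral_eq_lintegral_ofReal (integrable_subord hc) ?_]
  · rw [subord_integral hc]
  · filter_upwards [self_mem_ae_restrict measurableSet_Ioi] with t ht
    have ht' : (0:ℝ) < t := ht
    positivity



lemma real_inner_eq (k : ℕ) {β t : ℝ} (hβ : 0 < β) (ht : 0 < t) (n : ℝ) :
    rexp (-t) * t ^ (-(1/2):ℝ) *
      ((1 / (π * β / t) ^ ((1:ℝ)/2)) ^ k * rexp (-π / (π * β / t) * n))
      = (π * β) ^ (-((k:ℝ)/2)) * (t ^ (((k:ℝ)+1)/2 - 1) * rexp (-((1 + n / β) * t))) := by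
  have hπ := Real.pi_pos
  have hπβ : 0 < π * β := by positivity
  have h1 : -π / (π * β / t) * n = -(t / β) * n := by
    field_simp
  have h2 : (1 / (π * β / t) ^ ((1:ℝ)/2)) ^ k = (π * β) ^ (-((k:ℝ)/2)) * t ^ ((k:ℝ)/2) := by
    rw [one_div, ← Real.rpow_neg (by positivity),
      ← Real.rpow_natCast ((π * β / t) ^ (-(1/2) : ℝ)) k,
      ← Real.rpow_mul (by positivity : (0:ℝ) ≤ π * β / t),
      show (-(1/2) * (k:ℕ) : ℝ) = -((k:ℝ)/2) by push_cast; ring,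
      Real.div_rpow hπβ.le ht.le,
      Real.rpow_neg ht.le ((k:ℝ)/2), div_eq_mul_inv, inv_inv]
  have h3 : rexp (-t) * rexp (-(t / β) * n) = rexp (-((1 + n / β) * t)) := by
    rw [← Real.exp_add]
    congr 1
    field_simp
    ring
  have h4 : t ^ (-(1/2):ℝ) * t ^ ((k:ℝ)/2) = t ^ (((k:ℝ)+1)/2 - 1) := by
    rw [← Real.rpow_add ht]
    congr 1
    ring
  rw [h1, h2]
  calc rexp (-t) * t ^ (-(1/2):ℝ) * ((π * β) ^ (-((k:ℝ)/2)) * t ^ ((k:ℝ)/2) * rexp (-(t/β) * n))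
      = (π * β) ^ (-((k:ℝ)/2)) * ((t ^ (-(1/2):ℝ) * t ^ ((k:ℝ)/2)) * (rexp (-t) * rexp (-(t/β) * n))) := by
        ring
    _ = (π * β) ^ (-((k:ℝ)/2)) * (t ^ (((k:ℝ)+1)/2 - 1) * rexp (-((1 + n / β) * t))) := by
        rw [h3, h4]

lemma gamma_term_eq {β n s' : ℝ} (hβ : 0 < β) (hn : 0 ≤ n) :
    ((1 / (1 + n / β)) ^ s' * Real.Gamma s' : ℝ)
      = (β ^ s' * Real.Gamma s') * (n + β) ^ (-s') := by
  have h1 : (1 : ℝ) / (1 + n / β) = β / (n + β) := by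
    rw [show (1 : ℝ) + n / β = (n + β) / β by field_simp; ring, one_div_div]
  rw [h1, Real.div_rpow hβ.le (by positivity), Real.rpow_neg (by positivity)]
  ring

lemma const_eq (k : ℕ) {β : ℝ} (hβ : 0 < β) :
    (Real.sqrt π)⁻¹ * ((π * β) ^ (-((k:ℝ)/2)) * (β ^ (((k:ℝ)+1)/2) * Real.Gamma (((k:ℝ)+1)/2)))
      = Real.sqrt β * Real.Gamma (((k:ℝ)+1)/2) / π ^ (((k:ℝ)+1)/2) := by
  have hπ := Real.pi_pos
  rw [Real.sqrt_eq_rpow, ← Real.rpow_neg hπ.le, Real.mul_rpow hπ.le hβ.le,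
    Real.sqrt_eq_rpow]
  rw [show π ^ (-(1/2):ℝ) * (π ^ (-((k:ℝ)/2)) * β ^ (-((k:ℝ)/2)) * (β ^ (((k:ℝ)+1)/2) * Real.Gamma (((k:ℝ)+1)/2)))
      = (π ^ (-(1/2):ℝ) * π ^ (-((k:ℝ)/2))) * ((β ^ (-((k:ℝ)/2)) * β ^ (((k:ℝ)+1)/2)) * Real.Gamma (((k:ℝ)+1)/2)) by ring,
    ← Real.rpow_add hπ, ← Real.rpow_add hβ,
    show (-(1/2:ℝ) + -((k:ℝ)/2) : ℝ) = -(((k:ℝ)+1)/2) by ring,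
    show (-((k:ℝ)/2) + ((k:ℝ)+1)/2 : ℝ) = 1/2 by ring,
    Real.rpow_neg hπ.le]
  ring

lemma contOn_gamma (c e r : ℝ) :
    ContinuousOn (fun t : ℝ => c * (t ^ e * rexp (-(r * t)))) (Ioi 0) := by
  intro t ht
  have ht' : (0:ℝ) < t := ht
  refine continuousWithinAt_const.mul (ContinuousWithinAt.mul ?_ ?_)
  · exact (Real.continuousAt_rpow_const t e (Or.inl ht'.ne')).continuousWithinAt
  · exact (Real.continuous_exp.comp ((continuous_const.mul continuous_id).neg)).continuousAt.continuousWithinAt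

theorem hardy_type_identity (k : ℕ) (hk : 2 ≤ k) (β : ℝ) (hβ : 0 < β) :
    ∑' n : ℕ, (rsq k n : ℝ) * Real.exp (-2 * Real.pi * Real.sqrt (n * β)) =
      Real.sqrt β * Real.Gamma (((k : ℝ) + 1) / 2) / Real.pi ^ (((k : ℝ) + 1) / 2) *
        ∑' n : ℕ, (rsq k n : ℝ) / ((n : ℝ) + β) ^ (((k : ℝ) + 1) / 2) := by
  have hπ := Real.pi_pos
  have hs : (0:ℝ) < ((k:ℝ)+1)/2 := by positivity
  have hNcast : ∀ v : Fin k → ℤ, (((∑ i, (v i) ^ 2).toNat : ℝ)) = ∑ i, ((v i : ℝ)) ^ 2 := by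
    intro v
    have h1 : ((∑ i, (v i) ^ 2).toNat : ℤ) = ∑ i, (v i) ^ 2 := Int.toNat_of_nonneg (sum_sq_nonneg v)
    have h2 : (((∑ i, (v i) ^ 2).toNat : ℤ) : ℝ) = ((∑ i, (v i) ^ 2 : ℤ) : ℝ) := by
      exact_mod_cast h1
    push_cast at h2
    exact h2
  -- LHS as toReal of an ENNReal sum over lattice points
  have hL : ∑' n : ℕ, (rsq k n : ℝ) * Real.exp (-2 * Real.pi * Real.sqrt (n * β))
      = (∑' v : Fin k → ℤ, ENNReal.ofReal
          (rexp (-2 * π * Real.sqrt ((((∑ i, (v i) ^ 2).toNat : ℝ)) * β)))).toReal := by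
    rw [tsum_rsq k (fun n => ENNReal.ofReal (rexp (-2 * π * Real.sqrt ((n:ℝ) * β))))]
    rw [← tsum_toReal_ofReal
      (f := fun n : ℕ => (rsq k n : ℝ) * rexp (-2 * π * Real.sqrt ((n:ℝ) * β)))
      (fun n => by positivity)]
    congr 1
    refine tsum_congr fun n => ?_
    rw [ENNReal.ofReal_mul (by positivity), ENNReal.ofReal_natCast]
  -- RHS sum as toReal of an ENNReal sum over lattice points
  have hR : ∑' n : ℕ, (rsq k n : ℝ) / ((n : ℝ) + β) ^ (((k:ℝ)+1)/2)
      = (∑' v : Fin k → ℤ, ENNReal.ofReal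
          (((((∑ i, (v i) ^ 2).toNat : ℝ)) + β) ^ (-(((k:ℝ)+1)/2)))).toReal := by
    rw [tsum_rsq k (fun n => ENNReal.ofReal (((n:ℝ) + β) ^ (-(((k:ℝ)+1)/2))))]
    rw [← tsum_toReal_ofReal
      (f := fun n : ℕ => (rsq k n : ℝ) / ((n:ℝ) + β) ^ (((k:ℝ)+1)/2))
      (fun n => by positivity)]
    congr 1
    refine tsum_congr fun n => ?_
    rw [div_eq_mul_inv, ← Real.rpow_neg (by positivity),
      ENNReal.ofReal_mul (by positivity), ENNReal.ofReal_natCast]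
  -- main identity in ℝ≥0∞
  have key : ∑' v : Fin k → ℤ, ENNReal.ofReal
        (rexp (-2 * π * Real.sqrt ((((∑ i, (v i) ^ 2).toNat : ℝ)) * β)))
      = ENNReal.ofReal (Real.sqrt β * Real.Gamma (((k:ℝ)+1)/2) / π ^ (((k:ℝ)+1)/2)) *
        ∑' v : Fin k → ℤ, ENNReal.ofReal
          (((((∑ i, (v i) ^ 2).toNat : ℝ)) + β) ^ (-(((k:ℝ)+1)/2))) := by
    have step1 : ∀ v : Fin k → ℤ,
        ENNReal.ofReal (rexp (-2 * π * Real.sqrt ((((∑ i, (v i) ^ 2).toNat : ℝ)) * β)))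
          = ENNReal.ofReal ((Real.sqrt π)⁻¹) *
            ∫⁻ t in Ioi (0:ℝ), ENNReal.ofReal
              (rexp (-t - (π^2 * β * (((∑ i, (v i) ^ 2).toNat : ℝ))) / t) * t ^ (-(1/2):ℝ)) := by
      intro v
      have hn0 : (0:ℝ) ≤ (((∑ i, (v i) ^ 2).toNat : ℝ)) := Nat.cast_nonneg _
      rw [lint_subord (by positivity), ← ENNReal.ofReal_mul (by positivity)]
      congr 1
      have h1 : Real.sqrt (π^2 * β * (((∑ i, (v i) ^ 2).toNat : ℝ)))
          = π * Real.sqrt ((((∑ i, (v i) ^ 2).toNat : ℝ)) * β) := by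
        rw [show π^2 * β * (((∑ i, (v i) ^ 2).toNat : ℝ))
            = π^2 * ((((∑ i, (v i) ^ 2).toNat : ℝ)) * β) by ring,
          Real.sqrt_mul (by positivity), Real.sqrt_sq hπ.le]
      rw [h1, show -2 * (π * Real.sqrt ((((∑ i, (v i) ^ 2).toNat : ℝ)) * β))
          = -2 * π * Real.sqrt ((((∑ i, (v i) ^ 2).toNat : ℝ)) * β) by ring,
        ← mul_assoc, inv_mul_cancel₀ (by positivity : Real.sqrt π ≠ 0), one_mul]
    have hmeas1 : ∀ v : Fin k → ℤ, AEMeasurable (fun t : ℝ => ENNReal.ofReal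
        (rexp (-t - (π^2 * β * (((∑ i, (v i) ^ 2).toNat : ℝ))) / t) * t ^ (-(1/2):ℝ)))
        (volume.restrict (Ioi 0)) := fun v =>
      ENNReal.measurable_ofReal.comp_aemeasurable
        (((contOn_subord _).aestronglyMeasurable measurableSet_Ioi).aemeasurable)
    have hmeas2 : ∀ v : Fin k → ℤ, AEMeasurable (fun t : ℝ => ENNReal.ofReal
        ((π * β) ^ (-((k:ℝ)/2)) * (t ^ (((k:ℝ)+1)/2 - 1) *
          rexp (-((1 + (((∑ i, (v i) ^ 2).toNat : ℝ)) / β) * t)))))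
        (volume.restrict (Ioi 0)) := fun v =>
      ENNReal.measurable_ofReal.comp_aemeasurable
        (((contOn_gamma _ _ _).aestronglyMeasurable measurableSet_Ioi).aemeasurable)
    calc ∑' v : Fin k → ℤ, ENNReal.ofReal
          (rexp (-2 * π * Real.sqrt ((((∑ i, (v i) ^ 2).toNat : ℝ)) * β)))
        = ∑' v : Fin k → ℤ, (ENNReal.ofReal ((Real.sqrt π)⁻¹) *
            ∫⁻ t in Ioi (0:ℝ), ENNReal.ofReal
              (rexp (-t - (π^2 * β * (((∑ i, (v i) ^ 2).toNat : ℝ))) / t) * t ^ (-(1/2):ℝ))) :=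
          tsum_congr step1
      _ = ENNReal.ofReal ((Real.sqrt π)⁻¹) * ∑' v : Fin k → ℤ,
            ∫⁻ t in Ioi (0:ℝ), ENNReal.ofReal
              (rexp (-t - (π^2 * β * (((∑ i, (v i) ^ 2).toNat : ℝ))) / t) * t ^ (-(1/2):ℝ)) :=
          ENNReal.tsum_mul_left
      _ = ENNReal.ofReal ((Real.sqrt π)⁻¹) * ∫⁻ t in Ioi (0:ℝ), ∑' v : Fin k → ℤ,
            ENNReal.ofReal
              (rexp (-t - (π^2 * β * (((∑ i, (v i) ^ 2).toNat : ℝ))) / t) * t ^ (-(1/2):ℝ)) := by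
          rw [lintegral_tsum hmeas1]
      _ = ENNReal.ofReal ((Real.sqrt π)⁻¹) * ∫⁻ t in Ioi (0:ℝ), ∑' v : Fin k → ℤ,
            ENNReal.ofReal ((π * β) ^ (-((k:ℝ)/2)) * (t ^ (((k:ℝ)+1)/2 - 1) *
              rexp (-((1 + (((∑ i, (v i) ^ 2).toNat : ℝ)) / β) * t)))) := by
          congr 1
          refine setLIntegral_congr_fun_ae measurableSet_Ioi
            (Filter.Eventually.of_forall fun t ht => ?_)
          have ht' : (0:ℝ) < t := ht
          have ha : 0 < π * β / t := by positivity
          calc ∑' v : Fin k → ℤ, ENNReal.ofReal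
                (rexp (-t - (π^2 * β * (((∑ i, (v i) ^ 2).toNat : ℝ))) / t) * t ^ (-(1/2):ℝ))
              = ∑' v : Fin k → ℤ, (ENNReal.ofReal (rexp (-t) * t ^ (-(1/2):ℝ)) *
                  ENNReal.ofReal (rexp (-π * (π * β / t) * ∑ i, ((v i : ℝ)) ^ 2))) := by
                refine tsum_congr fun v => ?_
                rw [← ENNReal.ofReal_mul (by positivity)]
                congr 1
                have harg : -t - (π^2 * β * (((∑ i, (v i) ^ 2).toNat : ℝ))) / t
                    = -t + -π * (π * β / t) * ∑ i, ((v i : ℝ)) ^ 2 := by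
                  rw [← hNcast v]
                  field_simp
                  ring
                rw [harg, Real.exp_add]
                ring
            _ = ENNReal.ofReal (rexp (-t) * t ^ (-(1/2):ℝ)) *
                  ∑' v : Fin k → ℤ, ENNReal.ofReal (rexp (-π * (π * β / t) * ∑ i, ((v i : ℝ)) ^ 2)) :=
                ENNReal.tsum_mul_left
            _ = ENNReal.ofReal (rexp (-t) * t ^ (-(1/2):ℝ)) *
                  (ENNReal.ofReal ((1 / (π * β / t) ^ ((1:ℝ)/2)) ^ k) *
                    ∑' v : Fin k → ℤ,
                      ENNReal.ofReal (rexp (-π / (π * β / t) * ∑ i, ((v i : ℝ)) ^ 2))) := by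
                rw [theta_k k ha]
            _ = ∑' v : Fin k → ℤ, ENNReal.ofReal (rexp (-t) * t ^ (-(1/2):ℝ) *
                  ((1 / (π * β / t) ^ ((1:ℝ)/2)) ^ k *
                    rexp (-π / (π * β / t) * ∑ i, ((v i : ℝ)) ^ 2))) := by
                simp_rw [← ENNReal.tsum_mul_left]
                refine tsum_congr fun v => ?_
                rw [← ENNReal.ofReal_mul (by positivity), ← ENNReal.ofReal_mul (by positivity)]
            _ = ∑' v : Fin k → ℤ,
                ENNReal.ofReal ((π * β) ^ (-((k:ℝ)/2)) * (t ^ (((k:ℝ)+1)/2 - 1) *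
                  rexp (-((1 + (((∑ i, (v i) ^ 2).toNat : ℝ)) / β) * t)))) := by
                refine tsum_congr fun v => ?_
                congr 1
                rw [← hNcast v] -- replace the sum of real squares by the toNat cast
                exact real_inner_eq k hβ ht' _
      _ = ENNReal.ofReal ((Real.sqrt π)⁻¹) * ∑' v : Fin k → ℤ,
            ∫⁻ t in Ioi (0:ℝ), ENNReal.ofReal ((π * β) ^ (-((k:ℝ)/2)) *
              (t ^ (((k:ℝ)+1)/2 - 1) *
                rexp (-((1 + (((∑ i, (v i) ^ 2).toNat : ℝ)) / β) * t)))) := by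
          rw [lintegral_tsum hmeas2]
      _ = ENNReal.ofReal ((Real.sqrt π)⁻¹) * ∑' v : Fin k → ℤ,
            (ENNReal.ofReal ((π * β) ^ (-((k:ℝ)/2))) *
              ENNReal.ofReal ((1 / (1 + (((∑ i, (v i) ^ 2).toNat : ℝ)) / β)) ^ (((k:ℝ)+1)/2) *
                Real.Gamma (((k:ℝ)+1)/2))) := by
          congr 1
          refine tsum_congr fun v => ?_
          have hn0 : (0:ℝ) ≤ (((∑ i, (v i) ^ 2).toNat : ℝ)) := Nat.cast_nonneg _
          have hr : 0 < 1 + (((∑ i, (v i) ^ 2).toNat : ℝ)) / β := by positivity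
          calc ∫⁻ t in Ioi (0:ℝ), ENNReal.ofReal ((π * β) ^ (-((k:ℝ)/2)) *
                (t ^ (((k:ℝ)+1)/2 - 1) *
                  rexp (-((1 + (((∑ i, (v i) ^ 2).toNat : ℝ)) / β) * t))))
              = ∫⁻ t in Ioi (0:ℝ), ENNReal.ofReal ((π * β) ^ (-((k:ℝ)/2))) *
                  ENNReal.ofReal (t ^ (((k:ℝ)+1)/2 - 1) *
                    rexp (-((1 + (((∑ i, (v i) ^ 2).toNat : ℝ)) / β) * t))) := by
                simp_rw [ENNReal.ofReal_mul (by positivity : (0:ℝ) ≤ (π * β) ^ (-((k:ℝ)/2)))]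
            _ = ENNReal.ofReal ((π * β) ^ (-((k:ℝ)/2))) *
                  ∫⁻ t in Ioi (0:ℝ), ENNReal.ofReal (t ^ (((k:ℝ)+1)/2 - 1) *
                    rexp (-((1 + (((∑ i, (v i) ^ 2).toNat : ℝ)) / β) * t))) :=
                lintegral_const_mul' _ _ ENNReal.ofReal_ne_top
            _ = ENNReal.ofReal ((π * β) ^ (-((k:ℝ)/2))) *
                  ENNReal.ofReal ((1 / (1 + (((∑ i, (v i) ^ 2).toNat : ℝ)) / β)) ^ (((k:ℝ)+1)/2) *
                    Real.Gamma (((k:ℝ)+1)/2)) := by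
                rw [lint_gamma hs hr]
      _ = ENNReal.ofReal ((Real.sqrt π)⁻¹ * ((π * β) ^ (-((k:ℝ)/2)) *
            (β ^ (((k:ℝ)+1)/2) * Real.Gamma (((k:ℝ)+1)/2)))) *
          ∑' v : Fin k → ℤ, ENNReal.ofReal
            (((((∑ i, (v i) ^ 2).toNat : ℝ)) + β) ^ (-(((k:ℝ)+1)/2))) := by
          rw [← ENNReal.tsum_mul_left, ← ENNReal.tsum_mul_left]
          refine tsum_congr fun v => ?_
          have hn0 : (0:ℝ) ≤ (((∑ i, (v i) ^ 2).toNat : ℝ)) := Nat.cast_nonneg _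
          rw [gamma_term_eq hβ hn0,
            ENNReal.ofReal_mul (by positivity : (0:ℝ) ≤ β ^ (((k:ℝ)+1)/2) * Real.Gamma (((k:ℝ)+1)/2)),
            ENNReal.ofReal_mul (by positivity : (0:ℝ) ≤ (Real.sqrt π)⁻¹),
            ENNReal.ofReal_mul (by positivity : (0:ℝ) ≤ (π * β) ^ (-((k:ℝ)/2)))]
          ring
      _ = ENNReal.ofReal (Real.sqrt β * Real.Gamma (((k:ℝ)+1)/2) / π ^ (((k:ℝ)+1)/2)) *
          ∑' v : Fin k → ℤ, ENNReal.ofReal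
            (((((∑ i, (v i) ^ 2).toNat : ℝ)) + β) ^ (-(((k:ℝ)+1)/2))) := by
          rw [const_eq k hβ]
  rw [hL, hR, key, ENNReal.toReal_mul,
    ENNReal.toReal_ofReal (by positivity : (0:ℝ) ≤ Real.sqrt β * Real.Gamma (((k:ℝ)+1)/2) / π ^ (((k:ℝ)+1)/2))]
end
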